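/- arXiv:2510.05422 — 6 statements merged into one kernel-verified Lean document; each statement's English description precedes it below -/
import Mathlib

section
/- Fix integers s ≥ 1, r ≥ 2 and 1 ≤ p ≤ q with p+q < r ≤ s. Then for all sufficiently large n, ex_r(n, BM_{s+1} ∪ BK_{p,q}) ≤ s + C(2s, r) + C(2s, r−1)·(pq−1). -/
open Finset

/-- `H` is an `r`-uniform hypergraph (an `r`-graph): every hyperedge has exactly `r` vertices. -/
def IsUniform {V : Type*} (r : ℕ) (H : Finset (Finset V)) : Prop :=
  ∀ e ∈ H, e.card = r

/-- `H` contains a Berge copy of the graph with edge set `F`: there are an injection `g`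
of the vertices of `F` into the vertices of `H` and an injection `φ` of the edges of `F`
into the hyperedges of `H` such that `g '' e ⊆ φ e` for every edge `e` of `F`. -/
def ContainsBerge {α V : Type*} [DecidableEq α] [DecidableEq V]
    (F : Finset (Finset α)) (H : Finset (Finset V)) : Prop :=
  ∃ (g : α → V) (φ : Finset α → Finset V),
    Function.Injective g ∧ Set.InjOn φ ↑F ∧
      (∀ e ∈ F, φ e ∈ H) ∧ ∀ e ∈ F, e.image g ⊆ φ e

/-- `H` contains a copy (a subhypergraph isomorphic to) of the hypergraph with
vertex set `A` and edge set `F`. -/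
def ContainsCopy {α V : Type*} [DecidableEq α] [DecidableEq V]
    (A : Finset α) (F : Finset (Finset α)) (H : Finset (Finset V)) : Prop :=
  ∃ g : α → V, Set.InjOn g ↑A ∧ ∀ e ∈ F, e.image g ∈ H

/-- The edge set of the matching `M_t` consisting of `t` pairwise disjoint edges. -/
def matchingHG (t : ℕ) : Finset (Finset (Fin t × Fin 2)) :=
  Finset.univ.image fun i : Fin t => ({(i, 0), (i, 1)} : Finset (Fin t × Fin 2))

/-- The Turán number: the maximum number of hyperedges in an `r`-graph on `n` vertices
satisfying the freeness predicate `Free`. -/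
noncomputable def exr (n r : ℕ) (Free : Finset (Finset (Fin n)) → Prop) : ℕ :=
  sSup {m | ∃ H : Finset (Finset (Fin n)), IsUniform r H ∧ Free H ∧ H.card = m}

/-- The edge set of the complete bipartite graph `K_{p,q}`. -/
def completeBipartite (p q : ℕ) : Finset (Finset (Fin p ⊕ Fin q)) :=
  (Finset.univ ×ˢ Finset.univ).image
    fun x : Fin p × Fin q => ({Sum.inl x.1, Sum.inr x.2} : Finset (Fin p ⊕ Fin q))

section Aux

variable {n : ℕ} {H : Finset (Finset (Fin n))}

/-- A system of `t` distinct hyperedges together with `2t` distinct vertices, two of them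
in each hyperedge, yields a Berge copy of the matching `M_t`. -/
lemma berge_matching_of_system {t : ℕ}
    (φ : Fin t → Finset (Fin n)) (v : Fin t × Fin 2 → Fin n)
    (hφ : Function.Injective φ) (hv : Function.Injective v)
    (hmem : ∀ i, φ i ∈ H) (hin : ∀ i j, v (i, j) ∈ φ i) :
    ContainsBerge (matchingHG t) H := by
  classical
  set φ' : Finset (Fin t × Fin 2) → Finset (Fin n) :=
    fun e => if h : e.Nonempty then φ h.choose.1 else ∅ with hφ'
  have key : ∀ i : Fin t, φ' ({(i, 0), (i, 1)} : Finset (Fin t × Fin 2)) = φ i := by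
    intro i
    have hne : ({(i, 0), (i, 1)} : Finset (Fin t × Fin 2)).Nonempty := ⟨(i, 0), by simp⟩
    have hstep : φ' ({(i, 0), (i, 1)} : Finset (Fin t × Fin 2)) = φ hne.choose.1 :=
      dif_pos hne
    rw [hstep]
    have h2 : hne.choose ∈ ({(i, 0), (i, 1)} : Finset (Fin t × Fin 2)) := hne.choose_spec
    simp only [mem_insert, mem_singleton] at h2
    rcases h2 with h | h <;> rw [h]
  refine ⟨v, φ', hv, ?_, ?_, ?_⟩
  · intro e1 h1 e2 h2 heq
    simp only [coe_image, Set.mem_image, matchingHG, coe_univ, Set.image_univ,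
      Set.mem_range] at h1 h2
    obtain ⟨i1, hi1⟩ := h1
    obtain ⟨i2, hi2⟩ := h2
    subst hi1; subst hi2
    rw [key, key] at heq
    rw [hφ heq]
  · intro e he
    simp only [matchingHG, mem_image, mem_univ, true_and] at he
    obtain ⟨i, hi⟩ := he
    subst hi
    rw [key]; exact hmem i
  · intro e he
    simp only [matchingHG, mem_image, mem_univ, true_and] at he
    obtain ⟨i, hi⟩ := he
    subst hi
    rw [key]
    intro z hz
    simp only [mem_image, mem_insert, mem_singleton] at hz
    obtain ⟨w, hw | hw, hwz⟩ := hz <;> subst hw <;> rw [← hwz]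
    · exact hin i 0
    · exact hin i 1

/-- A matching system of size `t` can be extended using a hyperedge `e` not among the chosen
hyperedges that contains two distinct vertices not among the chosen vertices. -/
lemma extend_system {t : ℕ} (φ : Fin t → Finset (Fin n)) (v : Fin t × Fin 2 → Fin n)
    (hφ : Function.Injective φ) (hv : Function.Injective v)
    (e : Finset (Fin n)) (he : e ∈ H) (hmem : ∀ i, φ i ∈ H) (hin : ∀ i j, v (i, j) ∈ φ i)
    (henφ : ∀ i, φ i ≠ e) (x y : Fin n) (hx : x ∈ e) (hy : y ∈ e) (hxy : x ≠ y)
    (hxv : ∀ z, v z ≠ x) (hyv : ∀ z, v z ≠ y) :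
    ∃ (φ' : Fin (t+1) → Finset (Fin n)) (v' : Fin (t+1) × Fin 2 → Fin n),
      Function.Injective φ' ∧ Function.Injective v' ∧
        ∀ i, φ' i ∈ H ∧ ∀ j, v' (i, j) ∈ φ' i := by
  classical
  refine ⟨Fin.snoc φ e,
    fun z => (Fin.snoc (fun i : Fin t => v (i, z.2)) (if z.2 = 0 then x else y) :
      Fin (t+1) → Fin n) z.1, ?_, ?_, ?_⟩
  · intro a b hab
    induction a using Fin.lastCases with
    | last =>
      induction b using Fin.lastCases with
      | last => rfl
      | cast i =>
        rw [Fin.snoc_last, Fin.snoc_castSucc] at hab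
        exact absurd hab.symm (henφ i)
    | cast i =>
      induction b using Fin.lastCases with
      | last =>
        rw [Fin.snoc_castSucc, Fin.snoc_last] at hab
        exact absurd hab (henφ i)
      | cast i' =>
        rw [Fin.snoc_castSucc, Fin.snoc_castSucc] at hab
        rw [hφ hab]
  · rintro ⟨a1, a2⟩ ⟨b1, b2⟩ hab
    simp only at hab
    induction a1 using Fin.lastCases with
    | last =>
      induction b1 using Fin.lastCases with
      | last =>
        rw [Fin.snoc_last, Fin.snoc_last] at hab
        have : a2 = b2 := by fin_cases a2 <;> fin_cases b2 <;> simp_all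
        rw [this]
      | cast i =>
        rw [Fin.snoc_last, Fin.snoc_castSucc] at hab
        exfalso
        split_ifs at hab
        · exact hxv _ hab.symm
        · exact hyv _ hab.symm
    | cast i =>
      induction b1 using Fin.lastCases with
      | last =>
        rw [Fin.snoc_castSucc, Fin.snoc_last] at hab
        exfalso
        split_ifs at hab
        · exact hxv _ hab
        · exact hyv _ hab
      | cast i' =>
        rw [Fin.snoc_castSucc, Fin.snoc_castSucc] at hab
        have h2 := hv hab
        rw [Prod.mk.injEq] at h2 ⊢
        exact ⟨congrArg _ h2.1, h2.2⟩
  · intro i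
    induction i using Fin.lastCases with
    | last =>
      refine ⟨by rw [Fin.snoc_last]; exact he, fun j => ?_⟩
      simp only [Fin.snoc_last]
      split_ifs
      · exact hx
      · exact hy
    | cast i =>
      refine ⟨by rw [Fin.snoc_castSucc]; exact hmem i, fun j => ?_⟩
      simp only [Fin.snoc_castSucc]
      exact hin i j

lemma pairext {p q : ℕ} (x y : Fin p × Fin q)
    (h : ({Sum.inl x.1, Sum.inr x.2} : Finset (Fin p ⊕ Fin q)) = {Sum.inl y.1, Sum.inr y.2}) :
    x = y := by
  have h1 : (Sum.inl x.1 : Fin p ⊕ Fin q) ∈ ({Sum.inl y.1, Sum.inr y.2} : Finset _) := by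
    rw [← h]; simp
  have h2 : (Sum.inr x.2 : Fin p ⊕ Fin q) ∈ ({Sum.inl y.1, Sum.inr y.2} : Finset _) := by
    rw [← h]; simp
  simp only [mem_insert, mem_singleton, Sum.inl.injEq, reduceCtorEq, or_false,
    Sum.inr.injEq, false_or] at h1 h2
  exact Prod.ext h1 h2

/-- If a set `S` with at least `p + q` vertices has `p·q` "extension" vertices outside it,
each giving a hyperedge, then `H` contains a Berge copy of `K_{p,q}`. -/
lemma berge_Kpq_of {p q : ℕ}
    (S X : Finset (Fin n)) (hX : X.card = p * q)
    (hXS : ∀ x ∈ X, x ∉ S) (hS : p + q ≤ S.card)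
    (hmem : ∀ x ∈ X, insert x S ∈ H) :
    ContainsBerge (completeBipartite p q) H := by
  classical
  obtain ⟨A, hAS, hA⟩ := Finset.exists_subset_card_eq (le_trans (Nat.le_add_right _ _) hS)
  have hq' : q ≤ (S \ A).card := by
    rw [card_sdiff_of_subset hAS, hA]; omega
  obtain ⟨Bq, hBS, hBq⟩ := Finset.exists_subset_card_eq hq'
  set gA : Fin p → Fin n := fun i => (A.orderIsoOfFin hA i : Fin n) with hgAdef
  set gB : Fin q → Fin n := fun j => (Bq.orderIsoOfFin hBq j : Fin n) with hgBdef
  set xi : Fin (p * q) → Fin n := fun k => (X.orderIsoOfFin hX k : Fin n) with hxidef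
  have hgAinj : Function.Injective gA :=
    fun a b h => (A.orderIsoOfFin hA).injective (Subtype.ext h)
  have hgBinj : Function.Injective gB :=
    fun a b h => (Bq.orderIsoOfFin hBq).injective (Subtype.ext h)
  have hxiinj : Function.Injective xi :=
    fun a b h => (X.orderIsoOfFin hX).injective (Subtype.ext h)
  have hgAmem : ∀ i, gA i ∈ A := fun i => (A.orderIsoOfFin hA i).2
  have hgBmem : ∀ j, gB j ∈ Bq := fun j => (Bq.orderIsoOfFin hBq j).2
  have hximem : ∀ k, xi k ∈ X := fun k => (X.orderIsoOfFin hX k).2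
  set g : Fin p ⊕ Fin q → Fin n := Sum.elim gA gB with hgdef
  have hginj : Function.Injective g := by
    intro a b hab
    cases a with
    | inl i =>
      cases b with
      | inl i' => exact congrArg Sum.inl (hgAinj hab)
      | inr j =>
        exfalso
        have h1 := hgAmem i
        have h2 := mem_sdiff.1 (hBS (hgBmem j))
        rw [show gA i = gB j from hab] at h1
        exact h2.2 h1
    | inr j =>
      cases b with
      | inl i' =>
        exfalso
        have h1 := hgAmem i'
        have h2 := mem_sdiff.1 (hBS (hgBmem j))
        rw [← show gB j = gA i' from hab] at h1
        exact h2.2 h1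
      | inr j' => exact congrArg Sum.inr (hgBinj hab)
  set φ' : Finset (Fin p ⊕ Fin q) → Finset (Fin n) :=
    fun e => if h : ∃ x : Fin p × Fin q, e = {Sum.inl x.1, Sum.inr x.2}
      then insert (xi (finProdFinEquiv h.choose)) S else ∅ with hφ'def
  have key : ∀ x : Fin p × Fin q,
      φ' ({Sum.inl x.1, Sum.inr x.2} : Finset (Fin p ⊕ Fin q)) =
        insert (xi (finProdFinEquiv x)) S := by
    intro x
    have hex : ∃ y : Fin p × Fin q,
        ({Sum.inl x.1, Sum.inr x.2} : Finset (Fin p ⊕ Fin q)) = {Sum.inl y.1, Sum.inr y.2} :=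
      ⟨x, rfl⟩
    have hstep : φ' ({Sum.inl x.1, Sum.inr x.2} : Finset (Fin p ⊕ Fin q)) =
        insert (xi (finProdFinEquiv hex.choose)) S := dif_pos hex
    have hxe : hex.choose = x := (pairext x hex.choose hex.choose_spec).symm
    rw [hstep, hxe]
  refine ⟨g, φ', hginj, ?_, ?_, ?_⟩
  · intro e1 h1 e2 h2 heq
    simp only [completeBipartite, coe_image, Set.mem_image, mem_coe, mem_product] at h1 h2
    obtain ⟨x1, _, hx1⟩ := h1
    obtain ⟨x2, _, hx2⟩ := h2
    subst hx1; subst hx2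
    rw [key, key] at heq
    have hxieq : xi (finProdFinEquiv x1) = xi (finProdFinEquiv x2) := by
      have h1' := mem_insert_self (xi (finProdFinEquiv x1)) S
      rw [heq] at h1'
      rcases mem_insert.1 h1' with h | h
      · exact h
      · exact absurd h (hXS _ (hximem _))
    have := finProdFinEquiv.injective (hxiinj hxieq)
    rw [this]
  · intro e he
    simp only [completeBipartite, mem_image, mem_product] at he
    obtain ⟨x, _, hx⟩ := he
    subst hx
    rw [key]
    exact hmem _ (hximem _)
  · intro e he
    simp only [completeBipartite, mem_image, mem_product] at he
    obtain ⟨x, _, hx⟩ := he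
    subst hx
    rw [key]
    intro z hz
    simp only [mem_image, mem_insert, mem_singleton] at hz
    obtain ⟨w, hw | hw, hwz⟩ := hz <;> subst hw <;> rw [← hwz]
    · exact mem_insert_of_mem (hAS (hgAmem x.1))
    · exact mem_insert_of_mem ((sdiff_subset) (hBS (hgBmem x.2)))

/-- In a Berge-`K_{p,q}`-free hypergraph, a set `S` with at least `p + q` vertices has
at most `p·q − 1` extension vertices. -/
lemma count_Kpq {p q : ℕ} (hp : 1 ≤ p) (hq : 1 ≤ q)
    (hK : ¬ ContainsBerge (completeBipartite p q) H)
    (S : Finset (Fin n)) (hS : p + q ≤ S.card) :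
    (univ.filter fun x => x ∉ S ∧ insert x S ∈ H).card ≤ p * q - 1 := by
  classical
  by_contra hcon
  push_neg at hcon
  have hpq1 : 1 ≤ p * q := Nat.one_le_iff_ne_zero.2 (Nat.mul_ne_zero (by omega) (by omega))
  have hle : p * q ≤ (univ.filter fun x => x ∉ S ∧ insert x S ∈ H).card := by omega
  obtain ⟨X, hXsub, hXcard⟩ := exists_subset_card_eq hle
  exact hK (berge_Kpq_of S X hXcard
    (fun x hx => (mem_filter.1 (hXsub hx)).2.1) hS
    (fun x hx => (mem_filter.1 (hXsub hx)).2.2))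

/-- The main counting argument: any `r`-uniform hypergraph that is Berge-`M_{s+1}`-free and
Berge-`K_{p,q}`-free has at most `s + C(2s, r) + C(2s, r−1)(pq−1)` hyperedges. -/
lemma main_bound {s r p q : ℕ} (hr : 2 ≤ r) (hp : 1 ≤ p) (hq : 1 ≤ q)
    (h1 : p + q < r) (h2 : r ≤ s) (hU : IsUniform r H)
    (hM : ¬ ContainsBerge (matchingHG (s + 1)) H)
    (hK : ¬ ContainsBerge (completeBipartite p q) H) :
    H.card ≤ s + Nat.choose (2 * s) r + Nat.choose (2 * s) (r - 1) * (p * q - 1) := by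
  classical
  set P : ℕ → Prop := fun t => ∃ (φ : Fin t → Finset (Fin n)) (v : Fin t × Fin 2 → Fin n),
    Function.Injective φ ∧ Function.Injective v ∧ ∀ i, φ i ∈ H ∧ ∀ j, v (i, j) ∈ φ i with hPdef
  have hP0 : P 0 :=
    ⟨fun i => i.elim0, fun z => z.1.elim0, fun a => a.elim0, fun a => a.1.elim0,
      fun i => i.elim0⟩
  have hPs : ¬ P (s + 1) := by
    rintro ⟨φ, v, hφ, hv, hsys⟩
    exact hM (berge_matching_of_system φ v hφ hv (fun i => (hsys i).1) (fun i j => (hsys i).2 j))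
  set t := Nat.findGreatest P s with htdef
  have hts : t ≤ s := Nat.findGreatest_le s
  have hPt : P t := Nat.findGreatest_spec (Nat.zero_le s) hP0
  have hPt1 : ¬ P (t + 1) := by
    rcases eq_or_lt_of_le hts with h | h
    · rw [h]; exact hPs
    · exact Nat.findGreatest_is_greatest (Nat.lt_succ_self t) (by omega)
  obtain ⟨φ, v, hφ, hv, hsys⟩ := hPt
  set B : Finset (Fin n) := Finset.image v univ with hBdef
  have hBcard : B.card = 2 * t := by
    rw [hBdef, card_image_of_injective _ hv, card_univ]
    simp [mul_comm]
  have claimA : ∀ e ∈ H, (∀ i, φ i ≠ e) → (e \ B).card ≤ 1 := by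
    intro e he hne
    by_contra hc
    push_neg at hc
    obtain ⟨x, hxm, y, hym, hxy⟩ := Finset.one_lt_card.1 hc
    have hx := mem_sdiff.1 hxm
    have hy := mem_sdiff.1 hym
    have hxv : ∀ z, v z ≠ x := fun z hz => hx.2 (mem_image.2 ⟨z, mem_univ z, hz⟩)
    have hyv : ∀ z, v z ≠ y := fun z hz => hy.2 (mem_image.2 ⟨z, mem_univ z, hz⟩)
    exact hPt1 (extend_system φ v hφ hv e he (fun i => (hsys i).1) (fun i j => (hsys i).2 j)
      hne x y hx.1 hy.1 hxy hxv hyv)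
  -- counting
  set H1 := H.filter (fun e => ∃ i, φ i = e) with hH1def
  set Hr := H.filter (fun e => ¬ ∃ i, φ i = e) with hHrdef
  have split1 : H1.card + Hr.card = H.card :=
    Finset.card_filter_add_card_filter_not _
  have hH1 : H1.card ≤ s := by
    have hsub : H1 ⊆ Finset.image φ univ := by
      intro e heH
      obtain ⟨i, hi⟩ := (mem_filter.1 heH).2
      exact mem_image.2 ⟨i, mem_univ i, hi⟩
    calc H1.card ≤ (Finset.image φ univ).card := card_le_card hsub
      _ ≤ (univ : Finset (Fin t)).card := card_image_le
      _ = t := by simp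
      _ ≤ s := hts
  set H2 := Hr.filter (fun e => e ⊆ B) with hH2def
  set H3 := Hr.filter (fun e => ¬ e ⊆ B) with hH3def
  have split2 : H2.card + H3.card = Hr.card :=
    Finset.card_filter_add_card_filter_not _
  have hH2 : H2.card ≤ Nat.choose (2 * s) r := by
    have hsub : H2 ⊆ B.powersetCard r := by
      intro e heH
      have h := mem_filter.1 heH
      exact mem_powersetCard.2 ⟨h.2, hU e (mem_filter.1 h.1).1⟩
    calc H2.card ≤ (B.powersetCard r).card := card_le_card hsub
      _ = (B.card).choose r := card_powersetCard _ _
      _ ≤ (2 * s).choose r := by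
          rw [hBcard]; exact Nat.choose_le_choose r (by omega)
  have hH3 : H3.card ≤ Nat.choose (2 * s) (r - 1) * (p * q - 1) := by
    have hcard1 : ∀ e ∈ H3, (e \ B).card = 1 ∧ e ∈ H := by
      intro e heH
      have h3 := mem_filter.1 heH
      have hrm := mem_filter.1 h3.1
      have hle := claimA e hrm.1 (fun i hi => hrm.2 ⟨i, hi⟩)
      have hpos : 0 < (e \ B).card := card_pos.2 (sdiff_nonempty.2 h3.2)
      exact ⟨by omega, hrm.1⟩
    have hmemf : ∀ e ∈ H3, e ∩ B ∈ B.powersetCard (r - 1) := by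
      intro e heH
      obtain ⟨hc1, heHH⟩ := hcard1 e heH
      have hsum := card_inter_add_card_sdiff e B
      have her := hU e heHH
      exact mem_powersetCard.2 ⟨inter_subset_right, by omega⟩
    rw [Finset.card_eq_sum_card_fiberwise hmemf]
    have hfib : ∀ S ∈ B.powersetCard (r - 1),
        (H3.filter fun e => e ∩ B = S).card ≤ p * q - 1 := by
      intro S hSmem
      obtain ⟨hSB, hScard⟩ := mem_powersetCard.1 hSmem
      have hKbound := count_Kpq hp hq hK S (by omega)
      have hsub : (H3.filter fun e => e ∩ B = S) ⊆
          ((univ.filter fun x => x ∉ S ∧ insert x S ∈ H).image fun x => insert x S) := by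
        intro e heF
        have hm := mem_filter.1 heF
        obtain ⟨hc1, heHH⟩ := hcard1 e hm.1
        obtain ⟨x, hxeq⟩ := card_eq_one.1 hc1
        have hxe : x ∈ e \ B := hxeq ▸ mem_singleton_self x
        have hins : e = insert x S := by
          have hu := sdiff_union_inter e B
          rw [hm.2, hxeq] at hu
          rw [← hu, insert_eq]
        refine mem_image.2 ⟨x, mem_filter.2 ⟨mem_univ x, ?_, ?_⟩, hins.symm⟩
        · intro hxS
          exact (mem_sdiff.1 hxe).2 (hSB hxS)
        · rw [← hins]; exact heHH
      exact le_trans (card_le_card hsub) (le_trans card_image_le hKbound)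
    calc ∑ S ∈ B.powersetCard (r - 1), (H3.filter fun e => e ∩ B = S).card
        ≤ (B.powersetCard (r - 1)).card • (p * q - 1) :=
          Finset.sum_le_card_nsmul _ _ _ hfib
      _ = (B.card).choose (r - 1) * (p * q - 1) := by
          rw [card_powersetCard, smul_eq_mul]
      _ ≤ (2 * s).choose (r - 1) * (p * q - 1) := by
          rw [hBcard]
          exact Nat.mul_le_mul_right _ (Nat.choose_le_choose _ (by omega))
  omega

end Aux

/-- Theorem: for `1 ≤ p ≤ q` with `p+q < r ≤ s`, for all sufficiently large `n`,
`ex_r(n, BM_{s+1} ∪ BK_{p,q}) ≤ s + C(2s, r) + C(2s, r-1)(pq-1)`. -/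
theorem exr_berge_matching_and_berge_Kpq_iii
    (s r p q : ℕ) (hs : 1 ≤ s) (hr : 2 ≤ r) (hp : 1 ≤ p) (hpq : p ≤ q)
    (h1 : p + q < r) (h2 : r ≤ s) :
    ∃ n₀ : ℕ, ∀ n : ℕ, n₀ ≤ n →
      exr n r (fun H => ¬ ContainsBerge (matchingHG (s + 1)) H ∧
          ¬ ContainsBerge (completeBipartite p q) H) ≤
        s + Nat.choose (2 * s) r + Nat.choose (2 * s) (r - 1) * (p * q - 1) := by
  refine ⟨0, fun n _ => ?_⟩
  apply csSup_le'
  rintro m ⟨H, hU, ⟨hM, hK⟩, rfl⟩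
  exact main_bound hr hp (le_trans hp hpq) h1 h2 hU hM hK
end

section
/- Fix integers s ≥ 1, r ≥ 2 and 1 ≤ p ≤ q with p = r = s+1. Then for all sufficiently large n, ex_r(n, BM_{s+1} ∪ BK_{p,q}) = ex_r(n, BM_{s+1}). -/
open Finset

lemma berge_K_to_M {n s p q : ℕ} (hps : p = s + 1) (hq : s + 1 ≤ q)
    {H : Finset (Finset (Fin n))}
    (hK : ContainsBerge (completeBipartite p q) H) :
    ContainsBerge (matchingHG (s + 1)) H := by
  obtain ⟨g, φ, hginj, hφinj, hφH, hsub⟩ := hK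
  set f : Fin (s + 1) × Fin 2 → Fin p ⊕ Fin q := fun x =>
    if x.2 = 0 then Sum.inl (Fin.cast hps.symm x.1) else Sum.inr (Fin.castLE hq x.1) with hf
  have hfinj : Function.Injective f := by
    intro ⟨a, b⟩ ⟨a', b'⟩ hab
    simp only [hf] at hab
    fin_cases b <;> fin_cases b' <;> simp [Fin.ext_iff, Prod.ext_iff] at hab ⊢ <;> omega
  have himg : ∀ i : Fin (s + 1),
      ({(i, 0), (i, 1)} : Finset (Fin (s+1) × Fin 2)).image f
        = {Sum.inl (Fin.cast hps.symm i), Sum.inr (Fin.castLE hq i)} := by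
    intro i; simp [hf]
  have hmemK : ∀ i : Fin (s + 1),
      ({(i, 0), (i, 1)} : Finset (Fin (s+1) × Fin 2)).image f ∈ completeBipartite p q := by
    intro i
    rw [himg]
    exact Finset.mem_image.2 ⟨(Fin.cast hps.symm i, Fin.castLE hq i), by simp, rfl⟩
  refine ⟨g ∘ f, fun e => φ (e.image f), hginj.comp hfinj, ?_, ?_, ?_⟩
  · intro e₁ he₁ e₂ he₂ hφe
    obtain ⟨i, -, rfl⟩ := Finset.mem_image.1 he₁
    obtain ⟨j, -, rfl⟩ := Finset.mem_image.1 he₂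
    have := hφinj (Finset.mem_coe.2 (hmemK i)) (Finset.mem_coe.2 (hmemK j)) hφe
    rw [himg i, himg j] at this
    have hij : i = j := by
      have : Sum.inl (Fin.cast hps.symm i) ∈
          ({Sum.inl (Fin.cast hps.symm j), Sum.inr (Fin.castLE hq j)} :
            Finset (Fin p ⊕ Fin q)) := this ▸ (by simp)
      simpa [Fin.ext_iff] using this
    rw [hij]
  · intro e he
    obtain ⟨i, -, rfl⟩ := Finset.mem_image.1 he
    exact hφH _ (hmemK i)
  · intro e he
    obtain ⟨i, -, rfl⟩ := Finset.mem_image.1 he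
    rw [Finset.image_image.symm]
    exact hsub _ (hmemK i)

/-- Proposition: for `1 ≤ p ≤ q` with `p = r = s+1`, for all sufficiently large `n`,
`ex_r(n, BM_{s+1} ∪ BK_{p,q}) = ex_r(n, BM_{s+1})`. -/
theorem exr_berge_matching_and_berge_Kpq_p_eq_r
    (s r p q : ℕ) (hs : 1 ≤ s) (hr : 2 ≤ r) (hp : 1 ≤ p) (hpq : p ≤ q)
    (h1 : p = r) (h2 : r = s + 1) :
    ∃ n₀ : ℕ, ∀ n : ℕ, n₀ ≤ n →
      exr n r (fun H => ¬ ContainsBerge (matchingHG (s + 1)) H ∧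
          ¬ ContainsBerge (completeBipartite p q) H) =
        exr n r (fun H => ¬ ContainsBerge (matchingHG (s + 1)) H) := by
  refine ⟨0, fun n _ => ?_⟩
  have hps : p = s + 1 := h1.trans h2
  have hq : s + 1 ≤ q := hps ▸ hpq
  unfold exr
  congr 1
  ext m
  constructor
  · rintro ⟨H, hu, ⟨hM, -⟩, hc⟩; exact ⟨H, hu, hM, hc⟩
  · rintro ⟨H, hu, hM, hc⟩
    exact ⟨H, hu, ⟨hM, fun hK => hM (berge_K_to_M hps hq hK)⟩, hc⟩
end

section
/- Let r ≥ 2 be an integer and let 𝔉 be a finite family of graphs. Then for every n, ex_r(n, B𝔉) ≤ max{ e(G_red) + N(K_r, G_blue) : G is an n-vertex 𝔉-free graph and the edges of G are partitioned into a red set spanning G_red and a blue set spanning G_blue }. -/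
open Finset

/-- The number of copies of the complete graph `K_k` in the graph with edge set `G`:
the number of `k`-element vertex subsets all of whose pairs are edges of `G`. -/
def countClique {V : Type*} [Fintype V] [DecidableEq V] (k : ℕ)
    (G : Finset (Finset V)) : ℕ :=
  (((Finset.univ : Finset V).powersetCard k).filter
    fun S => ∀ x ∈ S, ∀ y ∈ S, x ≠ y → ({x, y} : Finset V) ∈ G).card

/-- Core construction: from an `r`-uniform hypergraph `H`, produce a red set `R`,
a blue set `D`, with an injective lifting of pairs to hyperedges. -/
theorem berge_decomp {n : ℕ} (H : Finset (Finset (Fin n))) :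
    ∃ (R D : Finset (Finset (Fin n))) (χ : Finset (Fin n) → Finset (Fin n)),
      Disjoint R D ∧
      (∀ p ∈ R, p.card = 2) ∧ (∀ p ∈ D, p.card = 2) ∧
      (∀ p ∈ R ∪ D, χ p ∈ H ∧ p ⊆ χ p) ∧
      (∀ p ∈ R ∪ D, ∀ q ∈ R ∪ D, χ p = χ q → p = q) ∧
      (∃ W : Finset (Finset (Fin n)), W ⊆ H ∧
        (H \ W).card = R.card ∧
        (∀ h ∈ W, ∀ x ∈ h, ∀ y ∈ h, x ≠ y → ({x, y} : Finset (Fin n)) ∈ D)) := by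
  classical
  set Pr : Finset (Finset (Fin n)) → Finset (Finset (Fin n)) :=
    fun A => A.biUnion fun h => h.powersetCard 2 with hPr
  obtain ⟨W, hWp, hWmax⟩ := Finset.exists_max_image H.powerset
      (fun A => (A.card : ℤ) - ((Pr A).card : ℤ)) ⟨∅, Finset.empty_mem_powerset H⟩
  have hWH : W ⊆ H := Finset.mem_powerset.mp hWp
  set D := Pr W with hD
  -- Hall condition for the red representatives
  have hall1 : ∀ s : Finset {x // x ∈ H \ W},
      s.card ≤ (s.biUnion fun x => x.1.powersetCard 2 \ D).card := by
    intro s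
    set A := s.image Subtype.val with hA
    have hAcard : A.card = s.card := Finset.card_image_of_injective _ Subtype.val_injective
    have hAHW : A ⊆ H \ W := by
      intro a ha; obtain ⟨x, _, rfl⟩ := Finset.mem_image.mp ha; exact x.2
    have hbi : s.biUnion (fun x => x.1.powersetCard 2 \ D) = Pr A \ D := by
      ext p
      simp only [Finset.mem_biUnion, Finset.mem_sdiff, hPr, hA, Finset.mem_image]
      constructor
      · rintro ⟨x, hx, hp, hpD⟩; exact ⟨⟨x.1, ⟨x, hx, rfl⟩, hp⟩, hpD⟩
      · rintro ⟨⟨a, ⟨x, hx, rfl⟩, hp⟩, hpD⟩; exact ⟨x, hx, hp, hpD⟩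
    have hdisj : Disjoint W A := Finset.disjoint_sdiff.mono_right hAHW
    have hcup : (W ∪ A).card = W.card + A.card := Finset.card_union_of_disjoint hdisj
    have hPru : Pr (W ∪ A) = D ∪ Pr A := by
      ext p; simp only [hPr, hD, Finset.mem_biUnion, Finset.mem_union]
      constructor
      · rintro ⟨h, hh | hh, hp⟩
        · exact Or.inl ⟨h, hh, hp⟩
        · exact Or.inr ⟨h, hh, hp⟩
      · rintro (⟨h, hh, hp⟩ | ⟨h, hh, hp⟩)
        · exact ⟨h, Or.inl hh, hp⟩
        · exact ⟨h, Or.inr hh, hp⟩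
    have hcc : (Pr A \ D).card + D.card = (Pr A ∪ D).card :=
      Finset.card_sdiff_add_card (s := Pr A) (t := D)
    have hcomm : Pr A ∪ D = D ∪ Pr A := Finset.union_comm _ _
    have hmax := hWmax (W ∪ A) (Finset.mem_powerset.mpr
      (Finset.union_subset hWH (hAHW.trans (Finset.sdiff_subset))))
    rw [hcup, hPru] at hmax
    rw [hbi]
    rw [hcomm] at hcc
    omega
  obtain ⟨f, hfinj, hf⟩ := (Finset.all_card_le_biUnion_card_iff_exists_injective _).mp hall1
  -- Hall condition for lifting blue pairs into W
  have hall2 : ∀ s : Finset {p // p ∈ D},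
      s.card ≤ (s.biUnion fun p => W.filter fun h => p.1 ⊆ h).card := by
    intro s
    set Ps := s.image Subtype.val with hPs
    have hPscard : Ps.card = s.card := Finset.card_image_of_injective _ Subtype.val_injective
    set B := s.biUnion (fun p => W.filter fun h => p.1 ⊆ h) with hB
    have hBW : B ⊆ W := by
      intro h hh
      obtain ⟨p, _, hm⟩ := Finset.mem_biUnion.mp hh
      exact (Finset.mem_filter.mp hm).1
    have hPsD : Ps ⊆ D := by
      intro p hp; obtain ⟨x, _, rfl⟩ := Finset.mem_image.mp hp; exact x.2
    have hsub : Pr (W \ B) ⊆ D \ Ps := by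
      intro p hp
      obtain ⟨h, hh, hph⟩ := Finset.mem_biUnion.mp hp
      have hhW : h ∈ W := (Finset.mem_sdiff.mp hh).1
      refine Finset.mem_sdiff.mpr ⟨Finset.mem_biUnion.mpr ⟨h, hhW, hph⟩, fun hpPs => ?_⟩
      obtain ⟨x, hx, hxval⟩ := Finset.mem_image.mp hpPs
      exact (Finset.mem_sdiff.mp hh).2 (Finset.mem_biUnion.mpr ⟨x, hx,
        Finset.mem_filter.mpr ⟨hhW, by rw [hxval]; exact (Finset.mem_powersetCard.mp hph).1⟩⟩)
    have hmax := hWmax (W \ B) (Finset.mem_powerset.mpr (Finset.sdiff_subset.trans hWH))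
    have e1 : (W \ B).card = W.card - B.card := Finset.card_sdiff_of_subset hBW
    have e2 : (Pr (W \ B)).card ≤ (D \ Ps).card := Finset.card_le_card hsub
    have e3 : (D \ Ps).card = D.card - Ps.card := Finset.card_sdiff_of_subset hPsD
    have e4 : B.card ≤ W.card := Finset.card_le_card hBW
    have e5 : Ps.card ≤ D.card := Finset.card_le_card hPsD
    omega
  obtain ⟨ψ, hψinj, hψ⟩ := (Finset.all_card_le_biUnion_card_iff_exists_injective _).mp hall2
  set R := (H \ W).attach.image f with hR
  have hRmem : ∀ p ∈ R, ∃ x : {x // x ∈ H \ W}, f x = p := by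
    intro p hp; obtain ⟨x, _, rfl⟩ := Finset.mem_image.mp hp; exact ⟨x, rfl⟩
  have hfprop : ∀ x : {x // x ∈ H \ W}, f x ∉ D ∧ f x ⊆ x.1 ∧ (f x).card = 2 := by
    intro x
    have := hf x
    rw [Finset.mem_sdiff] at this
    exact ⟨this.2, (Finset.mem_powersetCard.mp this.1).1, (Finset.mem_powersetCard.mp this.1).2⟩
  have hψprop : ∀ p : {p // p ∈ D}, ψ p ∈ W ∧ p.1 ⊆ ψ p := by
    intro p
    have := hψ p
    rw [Finset.mem_filter] at this
    exact this
  set χ : Finset (Fin n) → Finset (Fin n) := fun p =>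
    if hp : p ∈ D then ψ ⟨p, hp⟩
    else if hp' : ∃ x : {x // x ∈ H \ W}, f x = p then hp'.choose.1 else ∅ with hχ
  have hχD : ∀ p (hp : p ∈ D), χ p = ψ ⟨p, hp⟩ := by
    intro p hp; simp only [hχ, dif_pos hp]
  have hχR : ∀ p ∈ R, p ∉ D → ∃ x : {x // x ∈ H \ W}, f x = p ∧ χ p = x.1 := by
    intro p hp hpD
    have hex : ∃ x : {x // x ∈ H \ W}, f x = p := hRmem p hp
    refine ⟨hex.choose, hex.choose_spec, ?_⟩
    simp only [hχ, dif_neg hpD, dif_pos hex]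
  refine ⟨R, D, χ, ?_, ?_, ?_, ?_, ?_, W, hWH, ?_, ?_⟩
  · -- Disjoint R D
    rw [Finset.disjoint_left]
    intro p hp hpD
    obtain ⟨x, rfl⟩ := hRmem p hp
    exact (hfprop x).1 hpD
  · intro p hp
    obtain ⟨x, rfl⟩ := hRmem p hp
    exact (hfprop x).2.2
  · intro p hp
    obtain ⟨h, _, hph⟩ := Finset.mem_biUnion.mp hp
    exact (Finset.mem_powersetCard.mp hph).2
  · -- χ p ∈ H ∧ p ⊆ χ p
    intro p hp
    by_cases hpD : p ∈ D
    · rw [hχD p hpD]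
      exact ⟨hWH (hψprop ⟨p, hpD⟩).1, (hψprop ⟨p, hpD⟩).2⟩
    · have hpR : p ∈ R := (Finset.mem_union.mp hp).resolve_right hpD
      obtain ⟨x, hfx, hxval⟩ := hχR p hpR hpD
      rw [hxval]
      refine ⟨(Finset.mem_sdiff.mp x.2).1, ?_⟩
      rw [← hfx]; exact (hfprop x).2.1
  · -- injectivity of χ on R ∪ D
    intro p hp q hq heq
    by_cases hpD : p ∈ D <;> by_cases hqD : q ∈ D
    · rw [hχD p hpD, hχD q hqD] at heq
      exact congrArg Subtype.val (hψinj heq)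
    · exfalso
      have hqR : q ∈ R := (Finset.mem_union.mp hq).resolve_right hqD
      obtain ⟨y, hfy, hyval⟩ := hχR q hqR hqD
      rw [hχD p hpD, hyval] at heq
      have h1 : ψ ⟨p, hpD⟩ ∈ W := (hψprop ⟨p, hpD⟩).1
      rw [heq] at h1
      exact (Finset.mem_sdiff.mp y.2).2 h1
    · exfalso
      have hpR : p ∈ R := (Finset.mem_union.mp hp).resolve_right hpD
      obtain ⟨y, hfy, hyval⟩ := hχR p hpR hpD
      rw [hχD q hqD, hyval] at heq
      have h1 : ψ ⟨q, hqD⟩ ∈ W := (hψprop ⟨q, hqD⟩).1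
      rw [← heq] at h1
      exact (Finset.mem_sdiff.mp y.2).2 h1
    · have hpR : p ∈ R := (Finset.mem_union.mp hp).resolve_right hpD
      have hqR : q ∈ R := (Finset.mem_union.mp hq).resolve_right hqD
      obtain ⟨x, hfx, hxval⟩ := hχR p hpR hpD
      obtain ⟨y, hfy, hyval⟩ := hχR q hqR hqD
      rw [hxval, hyval] at heq
      rw [← hfx, ← hfy, Subtype.ext heq]
  · -- card
    rw [hR, Finset.card_image_of_injective _ hfinj, Finset.card_attach]
  · -- cliques of W are in D
    intro h hh x hx y hy hxy
    refine Finset.mem_biUnion.mpr ⟨h, hh, Finset.mem_powersetCard.mpr ⟨?_, Finset.card_pair hxy⟩⟩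
    exact Finset.insert_subset hx (Finset.singleton_subset_iff.mpr hy)

/-- Lemma: for a finite family `𝓕` of graphs (indexed by a finite type),
`ex_r(n, B𝓕)` is at most the maximum, over `n`-vertex `𝓕`-free graphs `G` whose edge
set is partitioned into a red set `R` and a blue set `G \ R`, of
`e(G_red) + N(K_r, G_blue)`. -/
theorem exr_berge_family_le_red_blue
    (r : ℕ) (hr : 2 ≤ r) {ι : Type} [Fintype ι] (m : ι → ℕ)
    (𝓕 : ∀ i, Finset (Finset (Fin (m i)))) (h2 : ∀ i, IsUniform 2 (𝓕 i)) (n : ℕ) :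
    exr n r (fun H => ∀ i, ¬ ContainsBerge (𝓕 i) H) ≤
      sSup {t | ∃ G R : Finset (Finset (Fin n)), IsUniform 2 G ∧ R ⊆ G ∧
        (∀ i, ¬ ContainsCopy Finset.univ (𝓕 i) G) ∧
        t = R.card + countClique r (G \ R)} := by
  classical
  apply csSup_le'
  rintro M ⟨H, hHu, hHfree, rfl⟩
  obtain ⟨R, D, χ, hdisj, hR2, hD2, hχmem, hχinj, W, hWH, hcard, hWD⟩ := berge_decomp H
  set G := R ∪ D with hG
  have hGR : G \ R = D := Finset.union_sdiff_cancel_left hdisj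
  have hGu : IsUniform 2 G := by
    intro p hp
    rcases Finset.mem_union.mp hp with h | h
    · exact hR2 p h
    · exact hD2 p h
  have hfree : ∀ i, ¬ ContainsCopy Finset.univ (𝓕 i) G := by
    rintro i ⟨g, hg, hgmem⟩
    have hginj : Function.Injective g := by
      rw [Finset.coe_univ] at hg; exact Set.injOn_univ.mp hg
    apply hHfree i
    refine ⟨g, fun e => χ (e.image g), hginj, ?_, ?_, ?_⟩
    · intro e he e' he' hee
      have h1 : e.image g ∈ G := hgmem e (Finset.mem_coe.mp he)
      have h2 : e'.image g ∈ G := hgmem e' (Finset.mem_coe.mp he')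
      exact (Finset.image_injective hginj) (hχinj _ h1 _ h2 hee)
    · intro e he; exact (hχmem _ (hgmem e he)).1
    · intro e he; exact (hχmem _ (hgmem e he)).2
  have hcount : W.card ≤ countClique r D := by
    unfold countClique
    apply Finset.card_le_card
    intro h hh
    simp only [Finset.mem_filter, Finset.mem_powersetCard_univ]
    exact ⟨hHu h (hWH hh), fun x hx y hy hxy => hWD h hh x hx y hy hxy⟩
  have hfin : H.card ≤ R.card + countClique r (G \ R) := by
    rw [hGR]
    calc H.card = (H \ W).card + W.card := (Finset.card_sdiff_add_card_eq_card hWH).symm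
    _ ≤ R.card + countClique r D := add_le_add (le_of_eq hcard) hcount
  refine le_trans hfin (le_csSup ?_ ⟨G, R, hGu, Finset.subset_union_left, hfree, rfl⟩)
  refine ⟨Fintype.card (Finset (Fin n)) + Fintype.card (Finset (Fin n)), ?_⟩
  rintro t ⟨G', R', _, _, _, rfl⟩
  exact add_le_add (Finset.card_le_univ _) (Finset.card_le_univ _)
end

section
/- Let r ≥ 3 be an integer, 𝔉 a finite family of graphs, and f ≥ 0 a real number such that ex(m, K_{r−1}, 𝔉⁻) ≤ f·m for every positive integer m, where 𝔉⁻ is the family of all graphs obtained by deleting a single vertex from some member of 𝔉. Then for every n, ex_r(n, B𝔉) ≤ max{ 2f/r, 1 } · ex(n, 𝔉). -/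
open Finset

namespace BergeAux

variable {V : Type*} [DecidableEq V]

/-- partial system-of-distinct-representative pairs on `T₀`. -/
def Valid (T₀ : Finset (Finset V)) (ψ : Finset V → Finset V) : Prop :=
  (∀ h ∈ T₀, ψ h ⊆ h ∧ (ψ h).card = 2) ∧ Set.InjOn ψ ↑T₀

open Classical in
/-- iterative closure of the set of pairs reachable from unmatched hyperedges. -/
noncomputable def Pk (D T₀ : Finset (Finset V)) (ψ : Finset V → Finset V) :
    ℕ → Finset (Finset V)
  | 0 => D.biUnion fun h => h.powersetCard 2
  | (k+1) => Pk D T₀ ψ k ∪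
      (T₀.filter fun h => ψ h ∈ Pk D T₀ ψ k).biUnion fun h => h.powersetCard 2

lemma Pk_mono (D T₀ : Finset (Finset V)) (ψ : Finset V → Finset V) (k : ℕ) :
    Pk D T₀ ψ k ⊆ Pk D T₀ ψ (k+1) := by
  rw [Pk]; exact subset_union_left

lemma Pk_mono_le (D T₀ : Finset (Finset V)) (ψ : Finset V → Finset V) {j k : ℕ}
    (h : j ≤ k) : Pk D T₀ ψ j ⊆ Pk D T₀ ψ k := by
  induction k with
  | zero => simp_all
  | succ k ih =>
    rcases Nat.lt_or_ge j (k+1) with h' | h'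
    · exact (ih (Nat.lt_succ_iff.mp h')).trans (Pk_mono _ _ _ _)
    · have : j = k + 1 := le_antisymm h h'
      subst this; exact Finset.Subset.refl _

lemma Pk_card_two (D T₀ : Finset (Finset V)) (ψ : Finset V → Finset V) (k : ℕ) :
    ∀ p ∈ Pk D T₀ ψ k, p.card = 2 := by
  induction k with
  | zero =>
    intro p hp
    rw [Pk, Finset.mem_biUnion] at hp
    obtain ⟨h, -, hp⟩ := hp
    exact (Finset.mem_powersetCard.mp hp).2
  | succ k ih =>
    intro p hp
    rw [Pk, Finset.mem_union] at hp
    rcases hp with hp | hp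
    · exact ih p hp
    · rw [Finset.mem_biUnion] at hp
      obtain ⟨h, -, hp⟩ := hp
      exact (Finset.mem_powersetCard.mp hp).2

lemma exists_fixpoint [Fintype V] (D T₀ : Finset (Finset V)) (ψ : Finset V → Finset V) :
    ∃ k, Pk D T₀ ψ (k+1) = Pk D T₀ ψ k := by
  by_contra hc
  push_neg at hc
  have hgrow : ∀ k, k ≤ (Pk D T₀ ψ k).card := by
    intro k
    induction k with
    | zero => exact Nat.zero_le _
    | succ k ih =>
      have hss : Pk D T₀ ψ k ⊂ Pk D T₀ ψ (k+1) :=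
        (Finset.ssubset_iff_subset_ne).mpr ⟨Pk_mono _ _ _ _, fun e => hc k e.symm⟩
      exact Nat.succ_le_of_lt (lt_of_le_of_lt ih (Finset.card_lt_card hss))
  have h1 := hgrow (Fintype.card (Finset V) + 1)
  have h2 := Finset.card_le_univ (Pk D T₀ ψ (Fintype.card (Finset V) + 1))
  omega

/-- The key augmenting-path lemma: every pair in the closure is matched. -/
lemma Pk_subset_image (H T₀ : Finset (Finset V)) (hTH : T₀ ⊆ H)
    (hmax : ∀ T ⊆ H, (∃ ψ, Valid T ψ) → T.card ≤ T₀.card) :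
    ∀ k, ∀ ψ, Valid T₀ ψ → Pk (H \ T₀) T₀ ψ k ⊆ T₀.image ψ := by
  classical
  intro k
  induction k using Nat.strong_induction_on with
  | _ k IH =>
  intro ψ hψ p hp
  by_contra hpim
  match k with
  | 0 =>
    rw [Pk, Finset.mem_biUnion] at hp
    obtain ⟨h, hhD, hph⟩ := hp
    rw [Finset.mem_sdiff] at hhD
    obtain ⟨hpsub, hp2⟩ := Finset.mem_powersetCard.mp hph
    -- extend the matching, contradiction with maximality
    have hval : Valid (insert h T₀) (Function.update ψ h p) := by
      constructor
      · intro h' hh'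
        rcases Finset.mem_insert.mp hh' with rfl | hh'
        · rw [Function.update_self]; exact ⟨hpsub, hp2⟩
        · have hne : h' ≠ h := fun e => hhD.2 (by rw [← e]; exact hh')
          rw [Function.update_of_ne hne]
          exact hψ.1 h' hh'
      · intro a ha b hb hab
        simp only [Finset.coe_insert, Set.mem_insert_iff, Finset.mem_coe] at ha hb
        have him : ∀ c ∈ T₀, Function.update ψ h p c = ψ c := fun c hc =>
          Function.update_of_ne (fun e => hhD.2 (by rw [← e]; exact hc)) _ _
        rcases ha with rfl | ha <;> rcases hb with rfl | hb
        · rfl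
        · exfalso; apply hpim
          rw [Function.update_self, him b hb] at hab
          rw [hab]; exact Finset.mem_image_of_mem ψ hb
        · exfalso; apply hpim
          rw [Function.update_self, him a ha] at hab
          rw [← hab]; exact Finset.mem_image_of_mem ψ ha
        · rw [him a ha, him b hb] at hab
          exact hψ.2 ha hb hab
    have hsub : insert h T₀ ⊆ H := Finset.insert_subset hhD.1 hTH
    have := hmax _ hsub ⟨_, hval⟩
    rw [Finset.card_insert_of_notMem hhD.2] at this
    omega
  | (k+1) =>
    rw [Pk, Finset.mem_union] at hp
    rcases hp with hp | hp
    · exact hpim (IH k (Nat.lt_succ_self k) ψ hψ hp)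
    rw [Finset.mem_biUnion] at hp
    obtain ⟨h, hhf, hph⟩ := hp
    rw [Finset.mem_filter] at hhf
    obtain ⟨hhT, hψhP⟩ := hhf
    obtain ⟨hpsub, hp2⟩ := Finset.mem_powersetCard.mp hph
    -- p not already in Pk k (else IH applies)
    have hpnot : p ∉ Pk (H \ T₀) T₀ ψ k := fun hin =>
      hpim (IH k (Nat.lt_succ_self k) ψ hψ hin)
    -- minimal level of ψ h
    have hex : ∃ j, ψ h ∈ Pk (H \ T₀) T₀ ψ j := ⟨k, hψhP⟩
    set ℓ := Nat.find hex with hℓdef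
    have hℓspec : ψ h ∈ Pk (H \ T₀) T₀ ψ ℓ := Nat.find_spec hex
    have hℓle : ℓ ≤ k := Nat.find_min' hex hψhP
    -- the rerouted matching
    set ψ' := Function.update ψ h p with hψ'def
    have hψ'h : ψ' h = p := Function.update_self _ _ _
    have hψ'ne : ∀ c, c ≠ h → ψ' c = ψ c := fun c hc => Function.update_of_ne hc _ _
    have hψ'val : Valid T₀ ψ' := by
      constructor
      · intro h' hh'
        rcases eq_or_ne h' h with rfl | hne
        · rw [hψ'h]; exact ⟨hpsub, hp2⟩
        · rw [hψ'ne h' hne]; exact hψ.1 h' hh'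
      · intro a ha b hb hab
        rw [Finset.mem_coe] at ha hb
        by_cases hna : a = h <;> by_cases hnb : b = h
        · rw [hna, hnb]
        · exfalso; rw [hna, hψ'h] at hab; rw [hψ'ne b hnb] at hab
          exact hpim (by rw [hab]; exact Finset.mem_image_of_mem ψ hb)
        · exfalso; rw [hnb, hψ'h] at hab; rw [hψ'ne a hna] at hab
          exact hpim (by rw [← hab]; exact Finset.mem_image_of_mem ψ ha)
        · rw [hψ'ne a hna, hψ'ne b hnb] at hab
          exact hψ.2 ha hb hab
    -- Pk agrees up to level ℓ
    have hagree : ∀ j ≤ ℓ, Pk (H \ T₀) T₀ ψ' j = Pk (H \ T₀) T₀ ψ j := by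
      intro j hj
      induction j with
      | zero => rw [Pk, Pk]
      | succ j ihj =>
        have hjℓ : j ≤ ℓ := Nat.le_of_succ_le hj
        have hA := ihj hjℓ
        rw [Pk, Pk, hA]
        congr 1
        apply Finset.biUnion_congr _ (fun _ _ => rfl)
        apply Finset.filter_congr
        intro c hcT
        by_cases he : c = h
        · subst he
          rw [hψ'h]
          have h1 : p ∉ Pk (H \ T₀) T₀ ψ j :=
            fun hin => hpnot (Pk_mono_le _ _ _ (hjℓ.trans hℓle) hin)
          have h2 := Nat.find_min hex (show j < ℓ from Nat.lt_of_succ_le hj)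
          simp [h1, h2]
        · rw [hψ'ne c he]
    -- derive contradiction via IH at level ℓ for ψ'
    have hmem' : ψ h ∈ Pk (H \ T₀) T₀ ψ' ℓ := (hagree ℓ le_rfl).symm ▸ hℓspec
    have := IH ℓ (Nat.lt_succ_of_le hℓle) ψ' hψ'val hmem'
    rw [Finset.mem_image] at this
    obtain ⟨c, hcT, hc⟩ := this
    by_cases hne : c = h
    · subst hne
      rw [hψ'h] at hc
      exact hpim (by rw [hc]; exact Finset.mem_image_of_mem ψ hhT)
    · rw [hψ'ne c hne] at hc
      exact hne (hψ.2 hcT hhT hc)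

lemma pair_eq_pair_cases {a b v u : V} (hab : a ≠ b)
    (h : ({v, u} : Finset V) = {a, b}) : (v = a ∧ u = b) ∨ (v = b ∧ u = a) := by
  have hv : v = a ∨ v = b := by
    have : v ∈ ({a, b} : Finset V) := by rw [← h]; simp
    simpa using this
  have hu : u = a ∨ u = b := by
    have : u ∈ ({a, b} : Finset V) := by rw [← h]; simp
    simpa using this
  have hamem : a = v ∨ a = u := by
    have : a ∈ ({v, u} : Finset V) := by rw [h]; simp
    simpa using this
  have hbmem : b = v ∨ b = u := by
    have : b ∈ ({v, u} : Finset V) := by rw [h]; simp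
    simpa using this
  rcases hv with hv | hv <;> rcases hu with hu | hu
  · exfalso; rcases hbmem with h' | h' <;> exact hab (h'.trans (by assumption)).symm
  · exact Or.inl ⟨hv, hu⟩
  · exact Or.inr ⟨hv, hu⟩
  · exfalso; rcases hamem with h' | h' <;> exact hab (h'.trans (by assumption))

lemma image_injOn_subsets {α β : Type*} [DecidableEq α] [DecidableEq β] {f : α → β}
    {u : Finset α} (hf : Set.InjOn f ↑u) {s t : Finset α} (hs : s ⊆ u) (ht : t ⊆ u)
    (h : s.image f = t.image f) : s = t := by
  apply Finset.Subset.antisymm <;> intro a ha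
  · have hm : f a ∈ t.image f := h ▸ Finset.mem_image_of_mem f ha
    obtain ⟨b, hb, hba⟩ := Finset.mem_image.mp hm
    have : b = a := hf (Finset.mem_coe.mpr (ht hb)) (Finset.mem_coe.mpr (hs ha)) hba
    rwa [← this]
  · have hm : f a ∈ s.image f := h.symm ▸ Finset.mem_image_of_mem f ha
    obtain ⟨b, hb, hba⟩ := Finset.mem_image.mp hm
    have : b = a := hf (Finset.mem_coe.mpr (hs hb)) (Finset.mem_coe.mpr (ht ha)) hba
    rwa [← this]

lemma sum_filter_mem [Fintype V] (C : Finset (Finset V)) :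
    ∑ v : V, (C.filter fun h => v ∈ h).card = ∑ h ∈ C, h.card := by
  classical
  simp_rw [Finset.card_filter]
  rw [Finset.sum_comm]
  apply Finset.sum_congr rfl
  intro h _
  rw [← Finset.card_filter]
  congr 1
  ext v
  simp

lemma sum_deg [Fintype V] (P : Finset (Finset V)) (hP : ∀ p ∈ P, p.card = 2) :
    ∑ v : V, (Finset.univ.filter fun u => ({v, u} : Finset V) ∈ P).card = 2 * P.card := by
  classical
  have h1 : ∑ v : V, (Finset.univ.filter fun u => ({v, u} : Finset V) ∈ P).card
      = ((Finset.univ ×ˢ Finset.univ : Finset (V × V)).filter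
          (fun z => ({z.1, z.2} : Finset V) ∈ P)).card := by
    rw [Finset.card_filter, Finset.sum_product]
    simp_rw [Finset.card_filter]
  rw [h1, Finset.card_eq_sum_card_fiberwise
       (f := fun z : V × V => ({z.1, z.2} : Finset V)) (t := P)
       (s := (Finset.univ ×ˢ Finset.univ : Finset (V × V)).filter
         (fun z => ({z.1, z.2} : Finset V) ∈ P))
       (fun z hz => (Finset.mem_filter.mp (Finset.mem_coe.mp hz)).2)]
  rw [Finset.sum_congr rfl (fun p hp => ?_), Finset.sum_const, smul_eq_mul, mul_comm]
  obtain ⟨a, b, hab, rfl⟩ := Finset.card_eq_two.mp (hP p hp)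
  have heq : (Finset.filter (fun z : V × V => ({z.1, z.2} : Finset V) = {a, b})
        ((Finset.univ ×ˢ Finset.univ).filter (fun z => ({z.1, z.2} : Finset V) ∈ P)))
      = {(a, b), (b, a)} := by
    ext z
    simp only [Finset.mem_filter, Finset.mem_product, Finset.mem_univ, true_and,
      Finset.mem_insert, Finset.mem_singleton]
    constructor
    · rintro ⟨-, hz⟩
      rcases pair_eq_pair_cases hab hz with ⟨h1', h2'⟩ | ⟨h1', h2'⟩
      · left; exact Prod.ext h1' h2'
      · right; exact Prod.ext h1' h2'
    · rintro (rfl | rfl)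
      · exact ⟨hp, rfl⟩
      · refine ⟨?_, by rw [Finset.pair_comm]⟩
        rwa [Finset.pair_comm (b : V) a]
  rw [heq]
  rw [Finset.card_insert_of_notMem (by simp [Prod.ext_iff]; exact fun h' => absurd h' hab),
    Finset.card_singleton]

lemma countClique_eq {W : Type*} [Fintype W] [DecidableEq W] (k : ℕ)
    (G : Finset (Finset W))
    [inst : DecidablePred fun S : Finset W => ∀ x ∈ S, ∀ y ∈ S, x ≠ y → ({x, y} : Finset W) ∈ G] :
    countClique k G = (((Finset.univ : Finset W).powersetCard k).filter
      (fun S => ∀ x ∈ S, ∀ y ∈ S, x ≠ y → ({x, y} : Finset W) ∈ G)).card := by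
  unfold countClique
  congr 1
  apply Finset.filter_congr_decidable

end BergeAux

lemma main_bound_s16 (r : ℕ) (hr : 3 ≤ r) {ι : Type} [Fintype ι] (m : ι → ℕ)
    (𝓕 : ∀ i, Finset (Finset (Fin (m i)))) (h2 : ∀ i, IsUniform 2 (𝓕 i))
    (f : ℝ) (hf0 : 0 ≤ f)
    (hf : ∀ N : ℕ, 0 < N →
      ((sSup {t | ∃ G : Finset (Finset (Fin N)), IsUniform 2 G ∧
          (∀ i, ∀ v : Fin (m i), ¬ ContainsCopy (Finset.univ.erase v)
            ((𝓕 i).filter fun e => v ∉ e) G) ∧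
          t = countClique (r - 1) G} : ℕ) : ℝ) ≤ f * N)
    (n : ℕ) (H : Finset (Finset (Fin n))) (hH : IsUniform r H)
    (hHfree : ∀ i, ¬ ContainsBerge (𝓕 i) H) :
    (H.card : ℝ) ≤ max (2 * f / r) 1 *
        (exr n 2 (fun G => ∀ i, ¬ ContainsCopy Finset.univ (𝓕 i) G) : ℝ) := by
  classical
  set E := exr n 2 (fun G => ∀ i, ¬ ContainsCopy Finset.univ (𝓕 i) G) with hEdef
  have hEmem : ∀ G : Finset (Finset (Fin n)), IsUniform 2 G →
      (∀ i, ¬ ContainsCopy Finset.univ (𝓕 i) G) → G.card ≤ E := by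
    intro G hG hGf
    have : G.card ≤ sSup {m | ∃ G' : Finset (Finset (Fin n)), IsUniform 2 G' ∧
        (∀ i, ¬ ContainsCopy Finset.univ (𝓕 i) G') ∧ G'.card = m} := by
      apply le_csSup
      · refine ⟨(Finset.univ : Finset (Finset (Fin n))).card, ?_⟩
        rintro x ⟨G', -, -, rfl⟩
        exact Finset.card_le_univ G'
      · exact ⟨G, hG, hGf, rfl⟩
    exact this
  -- maximum partial matching
  set 𝒮 := H.powerset.filter (fun T => ∃ ψ, BergeAux.Valid T ψ) with h𝒮def
  have h𝒮ne : 𝒮.Nonempty := by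
    refine ⟨∅, Finset.mem_filter.mpr ⟨Finset.mem_powerset.mpr (Finset.empty_subset H), ?_⟩⟩
    exact ⟨id, fun h hh => absurd hh (Finset.notMem_empty h), by simp⟩
  obtain ⟨T₀, hT₀mem, hT₀max⟩ := Finset.exists_max_image 𝒮 Finset.card h𝒮ne
  rw [h𝒮def, Finset.mem_filter, Finset.mem_powerset] at hT₀mem
  obtain ⟨hTH, ψ₁, hψ₁⟩ := hT₀mem
  have hmax : ∀ T ⊆ H, (∃ ψ, BergeAux.Valid T ψ) → T.card ≤ T₀.card := by
    intro T hT hex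
    exact hT₀max T (Finset.mem_filter.mpr ⟨Finset.mem_powerset.mpr hT, hex⟩)
  set D := H \ T₀ with hDdef
  obtain ⟨k₀, hk₀⟩ := BergeAux.exists_fixpoint D T₀ ψ₁
  set P := BergeAux.Pk D T₀ ψ₁ k₀ with hPdef
  have hPsub : P ⊆ T₀.image ψ₁ :=
    BergeAux.Pk_subset_image H T₀ hTH hmax k₀ ψ₁ hψ₁
  have hP2 : ∀ p ∈ P, p.card = 2 := BergeAux.Pk_card_two D T₀ ψ₁ k₀
  have hDpairs : ∀ h ∈ D, ∀ p, p ⊆ h → p.card = 2 → p ∈ P := by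
    intro h hh p hp1 hp2
    apply BergeAux.Pk_mono_le D T₀ ψ₁ (Nat.zero_le k₀)
    rw [BergeAux.Pk]
    exact Finset.mem_biUnion.mpr ⟨h, hh, Finset.mem_powersetCard.mpr ⟨hp1, hp2⟩⟩
  have hQpairs : ∀ h ∈ T₀, ψ₁ h ∈ P → ∀ p, p ⊆ h → p.card = 2 → p ∈ P := by
    intro h hh hmem p hp1 hp2
    have : p ∈ BergeAux.Pk D T₀ ψ₁ (k₀ + 1) := by
      rw [BergeAux.Pk]
      apply Finset.mem_union_right
      exact Finset.mem_biUnion.mpr ⟨h, Finset.mem_filter.mpr ⟨hh, hmem⟩,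
        Finset.mem_powersetCard.mpr ⟨hp1, hp2⟩⟩
    rwa [hk₀] at this
  set G₁ := T₀.image ψ₁ with hG₁def
  have hG₁unif : IsUniform 2 G₁ := by
    intro q hq
    obtain ⟨h, hh, rfl⟩ := Finset.mem_image.mp hq
    exact (hψ₁.1 h hh).2
  have hG₁free : ∀ i, ¬ ContainsCopy Finset.univ (𝓕 i) G₁ := by
    intro i hcopy
    obtain ⟨g, hginj, himg⟩ := hcopy
    apply hHfree i
    have hginj' : Function.Injective g := by
      rw [Finset.coe_univ] at hginj
      exact fun a b hab => hginj (Set.mem_univ a) (Set.mem_univ b) hab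
    set φ : Finset (Fin (m i)) → Finset (Fin n) :=
      fun ed => if hc : ed.image g ∈ G₁ then (Finset.mem_image.mp hc).choose else ∅
      with hφdef
    have hφ1 : ∀ ed ∈ 𝓕 i, φ ed ∈ T₀ ∧ ψ₁ (φ ed) = ed.image g := by
      intro ed hed
      have hc : ed.image g ∈ G₁ := himg ed hed
      have hrw : φ ed = (Finset.mem_image.mp hc).choose := by
        simp only [hφdef]
        exact dif_pos hc
      rw [hrw]
      exact ⟨(Finset.mem_image.mp hc).choose_spec.1, (Finset.mem_image.mp hc).choose_spec.2⟩
    refine ⟨g, φ, hginj', ?_, ?_, ?_⟩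
    · intro ed₁ hed₁ ed₂ hed₂ heq
      rw [Finset.mem_coe] at hed₁ hed₂
      have s₁ := hφ1 ed₁ hed₁
      have s₂ := hφ1 ed₂ hed₂
      have : ed₁.image g = ed₂.image g := by rw [← s₁.2, ← s₂.2, heq]
      exact Finset.image_injective hginj' this
    · intro ed hed
      exact hTH (hφ1 ed hed).1
    · intro ed hed
      rw [← (hφ1 ed hed).2]
      exact (hψ₁.1 _ (hφ1 ed hed).1).1
  set Q := T₀.filter (fun h => ψ₁ h ∈ P) with hQdef
  have hQP : Q.image ψ₁ = P := by
    apply Finset.Subset.antisymm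
    · intro p hp
      obtain ⟨h, hh, rfl⟩ := Finset.mem_image.mp hp
      exact (Finset.mem_filter.mp hh).2
    · intro p hp
      obtain ⟨h, hh, rfl⟩ := Finset.mem_image.mp (hPsub hp)
      exact Finset.mem_image_of_mem ψ₁ (Finset.mem_filter.mpr ⟨hh, hp⟩)
  have hQcard : Q.card = P.card := by
    rw [← hQP]
    exact (Finset.card_image_of_injOn
      (hψ₁.2.mono (Finset.coe_subset.mpr (Finset.filter_subset _ _)))).symm
  set C := D ∪ Q with hCdef
  have hCdisj : Disjoint D Q := by
    rw [Finset.disjoint_left]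
    intro h hD hQ
    exact (Finset.mem_sdiff.mp hD).2 (Finset.filter_subset _ _ hQ)
  have hCcard : C.card = D.card + Q.card := Finset.card_union_of_disjoint hCdisj
  have hCH : C ⊆ H :=
    Finset.union_subset (Finset.sdiff_subset) ((Finset.filter_subset _ _).trans hTH)
  have hCpairs : ∀ h ∈ C, ∀ p, p ⊆ h → p.card = 2 → p ∈ P := by
    intro h hh
    rcases Finset.mem_union.mp hh with hh | hh
    · exact hDpairs h hh
    · rw [Finset.mem_filter] at hh
      exact hQpairs h hh.1 hh.2
  -- per-vertex counting
  have hvert : ∀ v : Fin n, ((C.filter fun h => v ∈ h).card : ℝ) ≤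
      f * ((Finset.univ.filter fun u => ({v, u} : Finset (Fin n)) ∈ P).card : ℝ) := by
    intro v
    set Nv := Finset.univ.filter (fun u => ({v, u} : Finset (Fin n)) ∈ P) with hNvdef
    rcases Finset.eq_empty_or_nonempty (C.filter fun h => v ∈ h) with hemp | hne
    · rw [hemp]
      simp only [Finset.card_empty, Nat.cast_zero]
      exact mul_nonneg hf0 (Nat.cast_nonneg _)
    obtain ⟨h₀, hh₀⟩ := hne
    have hNmem : ∀ h ∈ C, v ∈ h → ∀ u ∈ h, u ≠ v → u ∈ Nv := by
      intro h hh hv u hu huv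
      rw [hNvdef, Finset.mem_filter]
      refine ⟨Finset.mem_univ u, hCpairs h hh {v, u} ?_ (Finset.card_pair (Ne.symm huv))⟩
      exact Finset.insert_subset_iff.mpr ⟨hv, Finset.singleton_subset_iff.mpr hu⟩
    have herase : ∀ h ∈ C, v ∈ h → h.erase v ⊆ Nv := by
      intro h hh hv u hu
      exact hNmem h hh hv u (Finset.mem_of_mem_erase hu) (Finset.ne_of_mem_erase hu)
    have hd : 0 < Nv.card := by
      rw [Finset.mem_filter] at hh₀
      obtain ⟨hh₀C, hvh₀⟩ := hh₀
      have hcard : (h₀.erase v).card = r - 1 := by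
        rw [Finset.card_erase_of_mem hvh₀, hH h₀ (hCH hh₀C)]
      have hne2 : (h₀.erase v).Nonempty := by
        rw [← Finset.card_pos, hcard]
        omega
      obtain ⟨u, hu⟩ := hne2
      exact Finset.card_pos.mpr ⟨u, herase h₀ hh₀C hvh₀ hu⟩
    set e := Nv.equivFin with hedef
    set eb : Fin n → Fin Nv.card := fun u => if hu : u ∈ Nv then e ⟨u, hu⟩ else ⟨0, hd⟩
      with hebdef
    have hebmem : ∀ u (hu : u ∈ Nv), eb u = e ⟨u, hu⟩ := by
      intro u hu
      rw [hebdef]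
      exact dif_pos hu
    have hebinj : Set.InjOn eb ↑Nv := by
      intro a ha b hb hab
      rw [Finset.mem_coe] at ha hb
      rw [hebmem a ha, hebmem b hb] at hab
      have := e.injective hab
      exact congrArg Subtype.val this
    have hvNv : v ∉ Nv := by
      rw [hNvdef, Finset.mem_filter]
      rintro ⟨-, hvv⟩
      have := hP2 _ hvv
      simp at this
    set Gv := (P.filter fun p => p ⊆ Nv).image (Finset.image eb) with hGvdef
    have hGvunif : IsUniform 2 Gv := by
      intro q hq
      rw [hGvdef, Finset.mem_image] at hq
      obtain ⟨p, hp, rfl⟩ := hq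
      rw [Finset.mem_filter] at hp
      rw [Finset.card_image_of_injOn (hebinj.mono (Finset.coe_subset.mpr hp.2))]
      exact hP2 p hp.1
    have hGvfree : ∀ i, ∀ w : Fin (m i), ¬ ContainsCopy (Finset.univ.erase w)
        ((𝓕 i).filter fun ed => w ∉ ed) Gv := by
      intro i w hcopy
      obtain ⟨g, hg, himg⟩ := hcopy
      apply hG₁free i
      refine ⟨fun x => if x = w then v else ((e.symm (g x)) : Fin n), ?_, ?_⟩
      · intro a _ b _ hab
        by_cases hna : a = w <;> by_cases hnb : b = w
        · rw [hna, hnb]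
        · exfalso
          simp only [if_pos hna, if_neg hnb] at hab
          exact hvNv (by rw [hab]; exact (e.symm (g b)).2)
        · exfalso
          simp only [if_neg hna, if_pos hnb] at hab
          exact hvNv (by rw [← hab]; exact (e.symm (g a)).2)
        · simp only [if_neg hna, if_neg hnb] at hab
          have h1' : e.symm (g a) = e.symm (g b) := Subtype.val_injective hab
          have h2' := e.symm.injective h1'
          refine hg ?_ ?_ h2'
          · exact Finset.mem_coe.mpr (Finset.mem_erase.mpr ⟨hna, Finset.mem_univ a⟩)
          · exact Finset.mem_coe.mpr (Finset.mem_erase.mpr ⟨hnb, Finset.mem_univ b⟩)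
      · intro ed hed
        have hNvP : ∀ u ∈ Nv, ({v, u} : Finset (Fin n)) ∈ P := by
          intro u hu
          exact (Finset.mem_filter.mp hu).2
        have key : ∀ z : Fin (m i), ({v, ((e.symm (g z)) : Fin n)} : Finset (Fin n)) ∈ G₁ := by
          intro z
          exact hPsub (hNvP _ (e.symm (g z)).2)
        by_cases hw : w ∈ ed
        · obtain ⟨x, y, hxy, hxyeq⟩ := Finset.card_eq_two.mp (h2 i ed hed)
          subst hxyeq
          by_cases hwx : x = w
          · have hyw : y ≠ w := by rw [← hwx]; exact fun e' => hxy e'.symm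
            have himeq : ({x, y} : Finset (Fin (m i))).image
                (fun z => if z = w then v else ((e.symm (g z)) : Fin n)) =
                {v, ((e.symm (g y)) : Fin n)} := by
              rw [Finset.image_insert, Finset.image_singleton, if_pos hwx, if_neg hyw]
            rw [himeq]
            exact key y
          · have hyw : y = w := by
              rcases Finset.mem_insert.mp hw with h' | h'
              · exact absurd h'.symm hwx
              · exact (Finset.mem_singleton.mp h').symm
            have himeq : ({x, y} : Finset (Fin (m i))).image
                (fun z => if z = w then v else ((e.symm (g z)) : Fin n)) =
                {v, ((e.symm (g x)) : Fin n)} := by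
              rw [Finset.image_insert, Finset.image_singleton, if_pos hyw, if_neg hwx,
                Finset.pair_comm]
            rw [himeq]
            exact key x
        · have hmem : ed.image g ∈ Gv := himg ed (Finset.mem_filter.mpr ⟨hed, hw⟩)
          rw [hGvdef, Finset.mem_image] at hmem
          obtain ⟨p, hp, hpeq⟩ := hmem
          rw [Finset.mem_filter] at hp
          have hstep : ed.image (fun x => if x = w then v else ((e.symm (g x)) : Fin n))
              = p := by
            have h1' : ed.image (fun x => if x = w then v else ((e.symm (g x)) : Fin n))
                = ed.image (fun x => ((e.symm (g x)) : Fin n)) :=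
              Finset.image_congr (fun x hx => by
                show (if x = w then v else ((e.symm (g x)) : Fin n))
                  = ((e.symm (g x)) : Fin n)
                rw [if_neg]
                intro hxw
                exact hw (by rw [← hxw]; exact hx))
            have h2' : ed.image (fun x => ((e.symm (g x)) : Fin n))
                = (ed.image g).image (fun t => ((e.symm t) : Fin n)) := by
              rw [Finset.image_image]
              rfl
            have h3' : (p.image eb).image (fun t => ((e.symm t) : Fin n)) = p := by
              rw [Finset.image_image]
              have hid : ∀ u ∈ p, ((e.symm (eb u)) : Fin n) = u := by
                intro u hu
                rw [hebmem u (hp.2 hu), Equiv.symm_apply_apply]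
              calc p.image ((fun t => ((e.symm t) : Fin n)) ∘ eb)
                  = p.image id := Finset.image_congr (fun u hu => hid u hu)
                _ = p := Finset.image_id
            rw [h1', h2', ← hpeq, h3']
          rw [hstep]
          exact hPsub hp.1
    have hcc : (C.filter fun h => v ∈ h).card ≤ countClique (r - 1) Gv := by
      rw [BergeAux.countClique_eq]
      apply Finset.card_le_card_of_injOn (fun h => (h.erase v).image eb)
      · intro h hh
        rw [Finset.mem_coe, Finset.mem_filter] at hh; rw [Finset.mem_coe]
        obtain ⟨hhC, hvh⟩ := hh
        refine Finset.mem_filter.mpr ⟨?_, ?_⟩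
        · rw [Finset.mem_powersetCard]
          refine ⟨Finset.subset_univ _, ?_⟩
          rw [Finset.card_image_of_injOn
            (hebinj.mono (Finset.coe_subset.mpr (herase h hhC hvh))),
            Finset.card_erase_of_mem hvh, hH h (hCH hhC)]
        · intro x hx y hy hxy
          obtain ⟨a, ha, rfl⟩ := Finset.mem_image.mp hx
          obtain ⟨b, hb, rfl⟩ := Finset.mem_image.mp hy
          have hab : a ≠ b := fun h' => hxy (by rw [h'])
          rw [hGvdef, Finset.mem_image]
          refine ⟨{a, b}, ?_, ?_⟩
          · rw [Finset.mem_filter]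
            constructor
            · apply hCpairs h hhC
              · intro z hz
                rcases Finset.mem_insert.mp hz with rfl | hz
                · exact Finset.mem_of_mem_erase ha
                · rw [Finset.mem_singleton.mp hz]; exact Finset.mem_of_mem_erase hb
              · exact Finset.card_pair hab
            · intro z hz
              rcases Finset.mem_insert.mp hz with rfl | hz
              · exact herase h hhC hvh ha
              · rw [Finset.mem_singleton.mp hz]; exact herase h hhC hvh hb
          · rw [Finset.image_insert, Finset.image_singleton]
      · intro h₁ hh₁ h₂ hh₂ heq
        rw [Finset.mem_coe, Finset.mem_filter] at hh₁ hh₂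
        have hsub₁ := herase h₁ hh₁.1 hh₁.2
        have hsub₂ := herase h₂ hh₂.1 hh₂.2
        have herased := BergeAux.image_injOn_subsets hebinj hsub₁ hsub₂ heq
        rw [← Finset.insert_erase hh₁.2, ← Finset.insert_erase hh₂.2, herased]
    have hGvN : (countClique (r - 1) Gv : ℝ) ≤ f * Nv.card := by
      have hmem : countClique (r - 1) Gv ∈ {t | ∃ G : Finset (Finset (Fin Nv.card)),
          IsUniform 2 G ∧ (∀ i, ∀ v : Fin (m i), ¬ ContainsCopy (Finset.univ.erase v)
            ((𝓕 i).filter fun e => v ∉ e) G) ∧ t = countClique (r - 1) G} :=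
        ⟨Gv, hGvunif, hGvfree, rfl⟩
      have hbdd : BddAbove {t | ∃ G : Finset (Finset (Fin Nv.card)),
          IsUniform 2 G ∧ (∀ i, ∀ v : Fin (m i), ¬ ContainsCopy (Finset.univ.erase v)
            ((𝓕 i).filter fun e => v ∉ e) G) ∧ t = countClique (r - 1) G} := by
        refine ⟨((Finset.univ : Finset (Fin Nv.card)).powersetCard (r - 1)).card, ?_⟩
        rintro t ⟨G, -, -, rfl⟩
        rw [BergeAux.countClique_eq]
        exact Finset.card_filter_le _ _
      have hle := le_csSup hbdd hmem
      calc (countClique (r - 1) Gv : ℝ)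
          ≤ ((sSup {t | ∃ G : Finset (Finset (Fin Nv.card)),
              IsUniform 2 G ∧ (∀ i, ∀ v : Fin (m i), ¬ ContainsCopy (Finset.univ.erase v)
                ((𝓕 i).filter fun e => v ∉ e) G) ∧ t = countClique (r - 1) G} : ℕ) : ℝ) :=
            Nat.cast_le.mpr hle
        _ ≤ f * Nv.card := hf Nv.card hd
    calc ((C.filter fun h => v ∈ h).card : ℝ)
        ≤ (countClique (r - 1) Gv : ℝ) := Nat.cast_le.mpr hcc
      _ ≤ f * Nv.card := hGvN
  -- summing up
  have hsum1 : ∑ v : Fin n, (C.filter fun h => v ∈ h).card = r * C.card := by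
    rw [BergeAux.sum_filter_mem]
    rw [Finset.sum_congr rfl (fun h hh => hH h (hCH hh))]
    rw [Finset.sum_const, smul_eq_mul, mul_comm]
  have hsum2 : ∑ v : Fin n, (Finset.univ.filter fun u =>
      ({v, u} : Finset (Fin n)) ∈ P).card = 2 * P.card := BergeAux.sum_deg P hP2
  have hA : (r : ℝ) * C.card ≤ f * (2 * P.card) := by
    have h1 := congrArg (Nat.cast (R := ℝ)) hsum1
    push_cast at h1
    have h2' := congrArg (Nat.cast (R := ℝ)) hsum2
    push_cast at h2'
    calc (r : ℝ) * C.card = ∑ v : Fin n, ((C.filter fun h => v ∈ h).card : ℝ) := by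
          rw [← h1]
      _ ≤ ∑ v : Fin n, f * ((Finset.univ.filter fun u =>
            ({v, u} : Finset (Fin n)) ∈ P).card : ℝ) :=
          Finset.sum_le_sum (fun v _ => hvert v)
      _ = f * ∑ v : Fin n, ((Finset.univ.filter fun u =>
            ({v, u} : Finset (Fin n)) ∈ P).card : ℝ) := by rw [Finset.mul_sum]
      _ = f * (2 * P.card) := by rw [h2']
  -- final assembly
  have hHcard : H.card = T₀.card + D.card := by
    have := Finset.card_sdiff_add_card_eq_card hTH
    rw [hDdef]
    omega
  have hT₀G₁ : G₁.card = T₀.card := Finset.card_image_of_injOn hψ₁.2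
  have hPG₁ : P.card ≤ G₁.card := Finset.card_le_card hPsub
  have hG₁E : G₁.card ≤ E := hEmem G₁ hG₁unif hG₁free
  have hrR : (3 : ℝ) ≤ (r : ℝ) := by exact_mod_cast hr
  have hrpos : (0 : ℝ) < r := by linarith
  have hc1 : (C.card : ℝ) = (D.card : ℝ) + (P.card : ℝ) := by
    rw [hCcard] at *
    push_cast [← hQcard]
    ring
  have hh1 : (H.card : ℝ) = (T₀.card : ℝ) + (D.card : ℝ) := by exact_mod_cast hHcard
  have hg1 : (G₁.card : ℝ) = (T₀.card : ℝ) := by exact_mod_cast hT₀G₁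
  have hp1 : (P.card : ℝ) ≤ (G₁.card : ℝ) := by exact_mod_cast hPG₁
  have he1 : (G₁.card : ℝ) ≤ (E : ℝ) := by exact_mod_cast hG₁E
  rcases le_or_gt (2 * f) (r : ℝ) with hcase | hcase
  · -- then D is empty and H.card = G₁.card ≤ E
    have hD0 : (D.card : ℝ) ≤ 0 := by nlinarith [Nat.cast_nonneg (α := ℝ) P.card]
    have hHE : (H.card : ℝ) ≤ (E : ℝ) := by
      have : (0 : ℝ) ≤ (D.card : ℝ) := Nat.cast_nonneg _
      linarith
    calc (H.card : ℝ) ≤ (E : ℝ) := hHE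
      _ ≤ max (2 * f / r) 1 * (E : ℝ) :=
          le_mul_of_one_le_left (Nat.cast_nonneg _) (le_max_right _ _)
  · have h1 : (r : ℝ) * H.card ≤ 2 * f * E := by
      nlinarith [Nat.cast_nonneg (α := ℝ) D.card, Nat.cast_nonneg (α := ℝ) P.card]
    have h2'' : (H.card : ℝ) ≤ 2 * f / r * E := by
      rw [div_mul_eq_mul_div, le_div_iff₀ hrpos]
      nlinarith
    exact h2''.trans (mul_le_mul_of_nonneg_right (le_max_left _ _) (Nat.cast_nonneg _))

/-- Theorem: let `𝓕` be a finite family of graphs and `f ≥ 0` a real with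
`ex(N, K_{r-1}, 𝓕⁻) ≤ f·N` for every positive integer `N`, where `𝓕⁻` consists of
the graphs obtained by deleting one vertex from a member of `𝓕`.  Then
`ex_r(n, B𝓕) ≤ max{2f/r, 1} · ex(n, 𝓕)`. -/
theorem exr_berge_family_le_max_mul_ex
    (r : ℕ) (hr : 3 ≤ r) {ι : Type} [Fintype ι] (m : ι → ℕ)
    (𝓕 : ∀ i, Finset (Finset (Fin (m i)))) (h2 : ∀ i, IsUniform 2 (𝓕 i))
    (f : ℝ) (hf0 : 0 ≤ f)
    (hf : ∀ N : ℕ, 0 < N →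
      ((sSup {t | ∃ G : Finset (Finset (Fin N)), IsUniform 2 G ∧
          (∀ i, ∀ v : Fin (m i), ¬ ContainsCopy (Finset.univ.erase v)
            ((𝓕 i).filter fun e => v ∉ e) G) ∧
          t = countClique (r - 1) G} : ℕ) : ℝ) ≤ f * N)
    (n : ℕ) :
    (exr n r (fun H => ∀ i, ¬ ContainsBerge (𝓕 i) H) : ℝ) ≤
      max (2 * f / r) 1 *
        (exr n 2 (fun G => ∀ i, ¬ ContainsCopy Finset.univ (𝓕 i) G) : ℝ) := by
  classical
  have hRHS0 : (0 : ℝ) ≤ max (2 * f / r) 1 *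
      (exr n 2 (fun G => ∀ i, ¬ ContainsCopy Finset.univ (𝓕 i) G) : ℝ) :=
    mul_nonneg (le_trans zero_le_one (le_max_right _ _)) (Nat.cast_nonneg _)
  rcases Set.eq_empty_or_nonempty {m' | ∃ H : Finset (Finset (Fin n)), IsUniform r H ∧
      (∀ i, ¬ ContainsBerge (𝓕 i) H) ∧ H.card = m'} with hS | hS
  · have hz : exr n r (fun H => ∀ i, ¬ ContainsBerge (𝓕 i) H) = 0 := by
      show sSup {m' | ∃ H : Finset (Finset (Fin n)), IsUniform r H ∧
        (∀ i, ¬ ContainsBerge (𝓕 i) H) ∧ H.card = m'} = 0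
      rw [hS, csSup_empty]
      rfl
    rw [hz]
    simpa using hRHS0
  · have hbdd : BddAbove {m' | ∃ H : Finset (Finset (Fin n)), IsUniform r H ∧
        (∀ i, ¬ ContainsBerge (𝓕 i) H) ∧ H.card = m'} := by
      refine ⟨(Finset.univ : Finset (Finset (Fin n))).card, ?_⟩
      rintro x ⟨H, -, -, rfl⟩
      exact Finset.card_le_univ H
    have hmem := Nat.sSup_mem hS hbdd
    obtain ⟨H, hHu, hHf, hcard⟩ := hmem
    have heq : exr n r (fun H => ∀ i, ¬ ContainsBerge (𝓕 i) H) = H.card := hcard.symm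
    rw [heq]
    exact main_bound_s16 r hr m 𝓕 h2 f hf0 hf n H hHu hHf
end

section
/- Let s ≥ 1 and r ≥ 2 be integers and let H be an n-vertex r-graph containing no Berge copy of M_{s+1}. Then at most s vertices of H have degree greater than s + C(2s, r−1); equivalently, if v_1, …, v_n are the vertices of H ordered so that d(v_1) ≥ d(v_2) ≥ … ≥ d(v_n), then d(v_{s+1}) ≤ s + C(2s, r−1). -/
open Finset

lemma pair_eq_pair {t : ℕ} {i j : Fin t} 
    (h : ({(i, 0), (i, 1)} : Finset (Fin t × Fin 2)) = {(j, 0), (j, 1)}) : i = j := by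
  have : ((i, 0) : Fin t × Fin 2) ∈ ({(j, 0), (j, 1)} : Finset (Fin t × Fin 2)) := by
    rw [← h]; simp
  simp only [Finset.mem_insert, Finset.mem_singleton, Prod.mk.injEq] at this
  rcases this with ⟨h1, _⟩ | ⟨_, h2⟩
  · exact h1
  · exact absurd h2 (by decide)

lemma greedy (s r n : ℕ) (hs : 1 ≤ s) (hr : 2 ≤ r)
    (H : Finset (Finset (Fin n))) (hU : IsUniform r H)
    (v : Fin (s + 1) → Fin n) (hv : Function.Injective v)
    (hdeg : ∀ i, s + Nat.choose (2 * s) (r - 1) < (H.filter fun e => v i ∈ e).card) :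
    ∀ k, (hk : k ≤ s + 1) → ∃ (e : Fin k → Finset (Fin n)) (w : Fin k → Fin n),
      Function.Injective e ∧ Function.Injective w ∧
      (∀ i : Fin k, e i ∈ H ∧ v ⟨i.val, by omega⟩ ∈ e i ∧ w i ∈ e i) ∧
      (∀ i : Fin k, ∀ j : Fin (s + 1), w i ≠ v j) := by
  intro k
  induction k with
  | zero => exact fun _ => ⟨Fin.elim0, Fin.elim0, fun i => i.elim0, fun i => i.elim0,
      fun i => i.elim0, fun i => i.elim0⟩
  | succ k ih =>
    intro hk
    obtain ⟨e, w, he, hw, hprop, hwv⟩ := ih (by omega)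
    set u : Fin n := v ⟨k, by omega⟩ with hu
    set B : Finset (Fin n) := (Finset.univ.image v) ∪ (Finset.univ.image w) with hB
    have huB : u ∈ B := by
      simp only [hB, Finset.mem_union, Finset.mem_image, Finset.mem_univ, true_and]
      exact Or.inl ⟨⟨k, by omega⟩, rfl⟩
    have hBcard : B.card ≤ 2 * s + 1 := by
      calc B.card ≤ (Finset.univ.image v).card + (Finset.univ.image w).card :=
            Finset.card_union_le _ _
        _ ≤ (s + 1) + k := by
            gcongr
            · exact (Finset.card_image_le).trans (by simp)
            · exact (Finset.card_image_le).trans (by simp)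
        _ ≤ 2 * s + 1 := by omega
    have hBecard : (B.erase u).card ≤ 2 * s := by
      rw [Finset.card_erase_of_mem huB]; omega
    set Bad : Finset (Finset (Fin n)) := H.filter (fun f => u ∈ f ∧ f ⊆ B) with hBad
    have hBadcard : Bad.card ≤ Nat.choose (2 * s) (r - 1) := by
      have : Bad.card ≤ ((B.erase u).powersetCard (r - 1)).card := by
        apply Finset.card_le_card_of_injOn (fun f => f.erase u)
        · intro f hf
          change f ∈ Bad at hf
          simp only [hBad, Finset.mem_filter] at hf
          obtain ⟨hfH, hfu, hfB⟩ := hf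
          rw [Finset.mem_coe, Finset.mem_powersetCard]
          constructor
          · exact Finset.erase_subset_erase _ hfB
          · rw [Finset.card_erase_of_mem hfu, hU f hfH]
        · intro f₁ h₁ f₂ h₂ heq
          have heq' : f₁.erase u = f₂.erase u := heq
          simp only [hBad, Finset.coe_filter, Set.mem_setOf_eq] at h₁ h₂
          rw [← Finset.insert_erase h₁.2.1, ← Finset.insert_erase h₂.2.1, heq']
      rw [Finset.card_powersetCard] at this
      exact this.trans (Nat.choose_le_choose _ hBecard)
    set D : Finset (Finset (Fin n)) := H.filter (fun f => u ∈ f) with hD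
    have hDcard : s + Nat.choose (2 * s) (r - 1) < D.card := hdeg _
    set E : Finset (Finset (Fin n)) := Finset.univ.image e with hE
    have hEcard : E.card ≤ s := (Finset.card_image_le).trans (by simp; omega)
    have hlt : (E ∪ Bad).card < D.card := by
      calc (E ∪ Bad).card ≤ E.card + Bad.card := Finset.card_union_le _ _
        _ ≤ s + Nat.choose (2 * s) (r - 1) := by omega
        _ < D.card := hDcard
    have hns : ¬ D ⊆ E ∪ Bad := fun hsub => absurd (Finset.card_le_card hsub) (Nat.not_le.mpr hlt)
    obtain ⟨f, hfD, hfnot⟩ := Finset.not_subset.mp hns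
    simp only [Finset.mem_union, not_or] at hfnot
    obtain ⟨hfE, hfBad⟩ := hfnot
    simp only [hD, Finset.mem_filter] at hfD
    obtain ⟨hfH, hfu⟩ := hfD
    have hfnsub : ¬ f ⊆ B := by
      intro hsub
      exact hfBad (by simp [hBad, hfH, hfu, hsub])
    obtain ⟨x, hxf, hxB⟩ := Finset.not_subset.mp hfnsub
    refine ⟨Fin.snoc e f, Fin.snoc w x, ?_, ?_, ?_, ?_⟩
    · intro i j hij
      induction i using Fin.lastCases with
      | last =>
        induction j using Fin.lastCases with
        | last => rfl
        | cast j =>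
          rw [Fin.snoc_last, Fin.snoc_castSucc] at hij
          exact absurd (by simp [hE]; exact ⟨j, hij.symm⟩ : f ∈ E) hfE
      | cast i =>
        induction j using Fin.lastCases with
        | last =>
          rw [Fin.snoc_last, Fin.snoc_castSucc] at hij
          exact absurd (by simp [hE]; exact ⟨i, hij⟩ : f ∈ E) hfE
        | cast j =>
          rw [Fin.snoc_castSucc, Fin.snoc_castSucc] at hij
          exact congrArg Fin.castSucc (he hij)
    · intro i j hij
      induction i using Fin.lastCases with
      | last =>
        induction j using Fin.lastCases with
        | last => rfl
        | cast j =>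
          rw [Fin.snoc_last, Fin.snoc_castSucc] at hij
          exact absurd (by simp [hB]; right; exact ⟨j, hij.symm⟩ : x ∈ B) hxB
      | cast i =>
        induction j using Fin.lastCases with
        | last =>
          rw [Fin.snoc_last, Fin.snoc_castSucc] at hij
          exact absurd (by simp [hB]; right; exact ⟨i, hij⟩ : x ∈ B) hxB
        | cast j =>
          rw [Fin.snoc_castSucc, Fin.snoc_castSucc] at hij
          exact congrArg Fin.castSucc (hw hij)
    · intro i
      induction i using Fin.lastCases with
      | last =>
        rw [Fin.snoc_last, Fin.snoc_last]
        exact ⟨hfH, by simpa [hu] using hfu, hxf⟩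
      | cast i =>
        rw [Fin.snoc_castSucc, Fin.snoc_castSucc]
        have := hprop i
        simpa using this
    · intro i j
      induction i using Fin.lastCases with
      | last =>
        rw [Fin.snoc_last]
        intro hxv
        exact hxB (by simp [hB]; left; exact ⟨j, hxv.symm⟩)
      | cast i =>
        rw [Fin.snoc_castSucc]
        exact hwv i j


/-- Claim: if `H` is an `n`-vertex `r`-graph with no Berge copy of `M_{s+1}`, then at
most `s` vertices of `H` have degree greater than `s + C(2s, r-1)`. -/
theorem berge_matching_free_few_large_degrees
    (s r n : ℕ) (hs : 1 ≤ s) (hr : 2 ≤ r)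
    (H : Finset (Finset (Fin n))) (hU : IsUniform r H)
    (hfree : ¬ ContainsBerge (matchingHG (s + 1)) H) :
    (Finset.univ.filter fun v : Fin n =>
        s + Nat.choose (2 * s) (r - 1) < (H.filter fun e => v ∈ e).card).card ≤ s := by
  classical
  by_contra hcon
  push_neg at hcon
  set T₀ := Finset.univ.filter fun v : Fin n =>
      s + Nat.choose (2 * s) (r - 1) < (H.filter fun e => v ∈ e).card with hT₀
  obtain ⟨T, hTsub, hTcard⟩ := Finset.exists_subset_card_eq (s := T₀) (n := s + 1) (by omega)
  set v : Fin (s + 1) → Fin n := fun i => (T.orderIsoOfFin hTcard i : Fin n) with hvdef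
  have hvinj : Function.Injective v :=
    fun i j hij => (T.orderIsoOfFin hTcard).injective (Subtype.val_injective hij)
  have hdeg : ∀ i, s + Nat.choose (2 * s) (r - 1) < (H.filter fun e => v i ∈ e).card := by
    intro i
    have : v i ∈ T₀ := hTsub (T.orderIsoOfFin hTcard i).2
    simpa [hT₀] using this
  obtain ⟨e, w, he, hw, hprop, hwv⟩ :=
    greedy s r n hs hr H hU v hvinj hdeg (s + 1) le_rfl
  apply hfree
  refine ⟨fun p => if p.2 = 0 then v p.1 else w p.1,
    fun E => if h : ∃ i : Fin (s + 1), E = ({(i, 0), (i, 1)} : Finset (Fin (s+1) × Fin 2))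
      then e h.choose else ∅, ?_, ?_, ?_, ?_⟩
  · -- g injective
    intro p q hpq
    simp only at hpq
    by_cases hp : p.2 = 0 <;> by_cases hq : q.2 = 0 <;> simp [hp, hq] at hpq
    · exact Prod.ext (hvinj hpq) (hp.trans hq.symm)
    · exact absurd hpq.symm (hwv q.1 p.1)
    · exact absurd hpq (hwv p.1 q.1)
    · exact Prod.ext (hw hpq) ((Fin.eq_one_of_ne_zero _ hp).trans
        (Fin.eq_one_of_ne_zero _ hq).symm)
  · -- φ injective on matching
    intro E hE E' hE' heq
    simp only [matchingHG, Finset.coe_image, Set.mem_image, Finset.mem_coe] at hE hE'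
    obtain ⟨i, -, hi⟩ := hE
    obtain ⟨j, -, hj⟩ := hE'
    subst hi hj
    have hex : ∃ a : Fin (s + 1),
        ({(i, 0), (i, 1)} : Finset (Fin (s+1) × Fin 2)) = {(a, 0), (a, 1)} := ⟨i, rfl⟩
    have hex' : ∃ a : Fin (s + 1),
        ({(j, 0), (j, 1)} : Finset (Fin (s+1) × Fin 2)) = {(a, 0), (a, 1)} := ⟨j, rfl⟩
    dsimp only at heq
    rw [dif_pos hex, dif_pos hex'] at heq
    have h1 : hex.choose = i := (pair_eq_pair hex.choose_spec.symm)
    have h2 : hex'.choose = j := (pair_eq_pair hex'.choose_spec.symm)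
    rw [h1, h2] at heq
    rw [he heq]
  · -- φ E ∈ H
    intro E hE
    simp only [matchingHG, Finset.mem_image, Finset.mem_univ, true_and] at hE
    obtain ⟨i, hi⟩ := hE
    subst hi
    have hex : ∃ a : Fin (s + 1),
        ({(i, 0), (i, 1)} : Finset (Fin (s+1) × Fin 2)) = {(a, 0), (a, 1)} := ⟨i, rfl⟩
    dsimp only
    rw [dif_pos hex, pair_eq_pair hex.choose_spec.symm]
    exact (hprop i).1
  · -- image g ⊆ φ E
    intro E hE
    simp only [matchingHG, Finset.mem_image, Finset.mem_univ, true_and] at hE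
    obtain ⟨i, hi⟩ := hE
    subst hi
    have hex : ∃ a : Fin (s + 1),
        ({(i, 0), (i, 1)} : Finset (Fin (s+1) × Fin 2)) = {(a, 0), (a, 1)} := ⟨i, rfl⟩
    dsimp only
    rw [dif_pos hex, pair_eq_pair hex.choose_spec.symm]
    intro x hx
    simp only [Finset.mem_image, Finset.mem_insert, Finset.mem_singleton] at hx
    obtain ⟨p, hp, hpx⟩ := hx
    rcases hp with hp | hp <;> subst hp <;> simp only at hpx <;> rw [← hpx]
    · simpa using (hprop i).2.1
    · simpa using (hprop i).2.2
end

section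
/- Let s ≥ 2 and r be integers with 3 ≤ r ≤ s+1. Then there exists n₀ such that for all n ≥ n₀, every n-vertex r-graph containing no Berge copy of M_{s+1} has maximum degree at most C(s−1, r−2)·(n−1) + C(s−1, r−1). -/
set_option linter.unusedSectionVars false
set_option linter.unreachableTactic false
set_option linter.unusedTactic false

open Finset


section BergeAux

variable {V : Type*} [DecidableEq V]

def Wness (L : Finset (Finset V)) {m : ℕ} (E : Fin m → Finset V) (a b : Fin m → V) : Prop :=
  Function.Injective E ∧ Function.Injective a ∧ Function.Injective b ∧
    (∀ i j, a i ≠ b j) ∧ (∀ i, E i ∈ L) ∧ (∀ i, a i ∈ E i) ∧ (∀ i, b i ∈ E i)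

def Good (L : Finset (Finset V)) (m : ℕ) : Prop :=
  ∃ (E : Fin m → Finset V) (a b : Fin m → V), Wness L E a b

def usedW {m : ℕ} (a b : Fin m → V) : Finset V :=
  Finset.univ.image a ∪ Finset.univ.image b

lemma a_mem_usedW {m : ℕ} (a b : Fin m → V) (i : Fin m) : a i ∈ usedW a b := by
  simp only [usedW, mem_union, mem_image]
  exact Or.inl ⟨i, mem_univ i, rfl⟩

lemma b_mem_usedW {m : ℕ} (a b : Fin m → V) (i : Fin m) : b i ∈ usedW a b := by
  simp only [usedW, mem_union, mem_image]
  exact Or.inr ⟨i, mem_univ i, rfl⟩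

lemma card_usedW_le {m : ℕ} (a b : Fin m → V) : (usedW a b).card ≤ 2 * m := by
  calc (usedW a b).card ≤ (Finset.univ.image a).card + (Finset.univ.image b).card :=
        card_union_le _ _
    _ ≤ m + m := by
        gcongr <;> exact card_image_le.trans (by simp)
    _ = 2 * m := by ring

lemma good_zero (L : Finset (Finset V)) : Good L 0 := by
  refine ⟨Fin.elim0, Fin.elim0, Fin.elim0, ?_, ?_, ?_, ?_, ?_, ?_, ?_⟩ <;>
    first
      | exact fun i => i.elim0
      | exact fun i _ => i.elim0

lemma snoc_injective {m : ℕ} {α : Type*} {f : Fin m → α} {x : α}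
    (hf : Function.Injective f) (hx : ∀ i, x ≠ f i) :
    Function.Injective (Fin.snoc f x : Fin (m + 1) → α) := by
  intro i j h
  induction i using Fin.lastCases with
  | last =>
    induction j using Fin.lastCases with
    | last => rfl
    | cast j => simp only [Fin.snoc_castSucc, Fin.snoc_last] at h; exact absurd h (hx j)
  | cast i =>
    induction j using Fin.lastCases with
    | last =>
      simp only [Fin.snoc_castSucc, Fin.snoc_last] at h
      exact absurd h.symm (hx i)
    | cast j =>
      simp only [Fin.snoc_castSucc] at h
      exact congrArg Fin.castSucc (hf h)

lemma Wness.extend {L : Finset (Finset V)} {m : ℕ} {E : Fin m → Finset V} {a b : Fin m → V}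
    (hw : Wness L E a b) {B : Finset V} {u v : V}
    (hB : B ∈ L) (hBE : ∀ i, B ≠ E i) (hu : u ∈ B) (hv : v ∈ B) (huv : u ≠ v)
    (hua : ∀ i, u ≠ a i) (hub : ∀ i, u ≠ b i) (hva : ∀ i, v ≠ a i) (hvb : ∀ i, v ≠ b i) :
    Wness L (Fin.snoc E B) (Fin.snoc a u) (Fin.snoc b v) := by
  obtain ⟨hE, ha, hb, hab, hEL, haE, hbE⟩ := hw
  refine ⟨snoc_injective hE hBE, snoc_injective ha hua, snoc_injective hb hvb, ?_, ?_, ?_, ?_⟩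
  · intro i j
    induction i using Fin.lastCases with
    | last =>
      induction j using Fin.lastCases with
      | last => simpa using huv
      | cast j => simpa using hub j
    | cast i =>
      induction j using Fin.lastCases with
      | last => simpa using fun h => (hva i) h.symm
      | cast j => simpa using hab i j
  · intro i
    induction i using Fin.lastCases with
    | last => simpa using hB
    | cast i => simpa using hEL i
  · intro i
    induction i using Fin.lastCases with
    | last => simpa using hu
    | cast i => simpa using haE i
  · intro i
    induction i using Fin.lastCases with
    | last => simpa using hv
    | cast i => simpa using hbE i


lemma card_filter_subset_le (L : Finset (Finset V)) (W : Finset V) (c : ℕ)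
    (hunif : ∀ B ∈ L, B.card = c) :
    (L.filter (fun B => B ⊆ W)).card ≤ W.card.choose c := by
  have h : L.filter (fun B => B ⊆ W) ⊆ W.powersetCard c := by
    intro B hB
    rw [mem_filter] at hB
    exact mem_powersetCard.mpr ⟨hB.2, hunif B hB.1⟩
  calc (L.filter (fun B => B ⊆ W)).card ≤ (W.powersetCard c).card := card_le_card h
    _ = W.card.choose c := card_powersetCard _ _

lemma card_filter_erase_subset_le (L : Finset (Finset V)) (x : V) (W : Finset V) (K : ℕ)
    (hunif : ∀ B ∈ L, B.card = K + 2) :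
    (L.filter (fun B => x ∈ B ∧ B.erase x ⊆ W)).card ≤ W.card.choose (K + 1) := by
  have h := card_le_card_of_injOn (f := fun B => B.erase x)
    (s := L.filter (fun B => x ∈ B ∧ B.erase x ⊆ W)) (t := W.powersetCard (K + 1)) ?_ ?_
  · rwa [card_powersetCard] at h
  · intro B hB
    rw [mem_coe, mem_filter] at hB
    rw [mem_coe]
    refine mem_powersetCard.mpr ⟨hB.2.2, ?_⟩
    rw [card_erase_of_mem hB.2.1, hunif B hB.1]
    omega

  · intro B1 h1 B2 h2 h
    rw [mem_coe, mem_filter] at h1 h2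
    have h' : B1.erase x = B2.erase x := h
    rw [← insert_erase h1.2.1, ← insert_erase h2.2.1, h']

lemma not_good_del (L : Finset (Finset V)) (x : V) (m K : ℕ)
    (hunif : ∀ B ∈ L, B.card = K + 2)
    (hng : ¬ Good L (m + 1))
    (hdeg : (2 * m).choose (K + 1) + m + 1 ≤ (L.filter (fun B => x ∈ B)).card) :
    ¬ Good (L.filter (fun B => x ∉ B)) m := by
  rintro ⟨E, a, b, hw⟩
  have hw' : Wness L E a b := by
    obtain ⟨h1, h2, h3, h4, h5, h6, h7⟩ := hw
    exact ⟨h1, h2, h3, h4, fun i => (mem_filter.mp (h5 i)).1, h6, h7⟩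
  have hxE : ∀ i, x ∉ E i := fun i => (mem_filter.mp (hw.2.2.2.2.1 i)).2
  set W := usedW a b with hWdef
  have hWcard : W.card ≤ 2 * m := card_usedW_le a b
  -- find a fresh B through x
  have hex : ∃ B ∈ L, x ∈ B ∧ ¬ (B.erase x ⊆ W) := by
    by_contra hno
    push_neg at hno
    have hsub : L.filter (fun B => x ∈ B) ⊆ L.filter (fun B => x ∈ B ∧ B.erase x ⊆ W) := by
      intro B hB
      rw [mem_filter] at hB ⊢
      exact ⟨hB.1, hB.2, hno B hB.1 hB.2⟩
    have h1 := (card_le_card hsub).trans (card_filter_erase_subset_le L x W K hunif)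
    have h2 := Nat.choose_le_choose (K + 1) hWcard
    omega
  obtain ⟨B, hBL, hxB, hnsub⟩ := hex
  obtain ⟨y, hyB, hyW⟩ := not_subset.mp hnsub
  have hyx : y ≠ x := (mem_erase.mp hyB).1
  apply hng
  refine ⟨_, _, _, hw'.extend hBL (fun i h => hxE i (h ▸ hxB)) hxB (mem_of_mem_erase hyB)
    hyx.symm ?_ ?_ ?_ ?_⟩
  · exact fun i h => hxE i (h ▸ hw'.2.2.2.2.2.1 i)
  · exact fun i h => hxE i (h ▸ hw'.2.2.2.2.2.2 i)
  · exact fun i h => hyW (h ▸ a_mem_usedW a b i)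
  · exact fun i h => hyW (h ▸ b_mem_usedW a b i)

lemma not_good_link (L : Finset (Finset V)) (x : V) (m K : ℕ)
    (hng : ¬ Good L (m + 1))
    (hdeg : (2 * m).choose (K + 1) + m + 1 ≤ (L.filter (fun B => x ∈ B)).card)
    (hunif : ∀ B ∈ L, B.card = K + 2) :
    ¬ Good ((L.filter (fun B => x ∈ B)).image (fun B => B.erase x)) m := by
  rintro ⟨E, a, b, hE, ha, hb, hab, hEL, haE, hbE⟩
  have hEmem : ∀ i, insert x (E i) ∈ L ∧ x ∉ E i := by
    intro i
    obtain ⟨B', hB', hB'e⟩ := mem_image.mp (hEL i)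
    rw [mem_filter] at hB'
    constructor
    · rw [← hB'e, insert_erase hB'.2]; exact hB'.1
    · rw [← hB'e]; exact notMem_erase x B'
  set W := usedW a b with hWdef
  have hWcard : W.card ≤ 2 * m := card_usedW_le a b
  have hex : ∃ B ∈ L, x ∈ B ∧ ¬ (B.erase x ⊆ W) ∧ ∀ i, B.erase x ≠ E i := by
    by_contra hno
    push_neg at hno
    -- every B through x is in F1 ∪ F2
    have hsub : L.filter (fun B => x ∈ B) ⊆
        (L.filter (fun B => x ∈ B ∧ B.erase x ⊆ W)) ∪
          (Finset.univ.image (fun i => insert x (E i))) := by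
      intro B hB
      rw [mem_filter] at hB
      rcases Classical.em (B.erase x ⊆ W) with h | h
      · exact mem_union_left _ (mem_filter.mpr ⟨hB.1, hB.2, h⟩)
      · have h2 := hno B hB.1 hB.2 h
        obtain ⟨i, hi⟩ := h2
        refine mem_union_right _ (mem_image.mpr ⟨i, mem_univ i, ?_⟩)
        rw [← hi, insert_erase hB.2]
    have h1 := (card_le_card hsub).trans (card_union_le _ _)
    have h2 := (card_filter_erase_subset_le L x W K hunif).trans
      (Nat.choose_le_choose (K + 1) hWcard)
    have h3 : (Finset.univ.image (fun i : Fin m => insert x (E i))).card ≤ m := by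
      calc _ ≤ (Finset.univ : Finset (Fin m)).card := card_image_le
        _ = m := by simp
    omega
  obtain ⟨B, hBL, hxB, hnsub, hBne⟩ := hex
  obtain ⟨y, hyB, hyW⟩ := not_subset.mp hnsub
  have hyx : y ≠ x := (mem_erase.mp hyB).1
  have hw' : Wness L (fun i => insert x (E i)) a b := by
    refine ⟨?_, ha, hb, hab, fun i => (hEmem i).1, ?_, ?_⟩
    · intro i j h
      apply hE
      have := congrArg (fun s => Finset.erase s x) h
      simpa [erase_insert (hEmem i).2, erase_insert (hEmem j).2] using this
    · exact fun i => mem_insert_of_mem (haE i)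
    · exact fun i => mem_insert_of_mem (hbE i)
  apply hng
  have hxEa : ∀ i, x ≠ a i := fun i h => (hEmem i).2 (h ▸ haE i)
  have hxEb : ∀ i, x ≠ b i := fun i h => (hEmem i).2 (h ▸ hbE i)
  refine ⟨_, _, _, hw'.extend hBL ?_ hxB (mem_of_mem_erase hyB) hyx.symm hxEa hxEb ?_ ?_⟩
  · intro i h
    exact hBne i (by rw [h, erase_insert (hEmem i).2])
  · exact fun i h => hyW (h ▸ a_mem_usedW a b i)
  · exact fun i h => hyW (h ▸ b_mem_usedW a b i)


lemma exists_maximal_witness (L : Finset (Finset V)) (m : ℕ) (hng : ¬ Good L (m + 1)) :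
    ∃ (t : ℕ) (E : Fin t → Finset V) (a b : Fin t → V), t ≤ m ∧ Wness L E a b ∧
      (∀ B ∈ L, (∀ i, B ≠ E i) → (B \ usedW a b).card ≤ 1) ∧
      (∀ t', t' ≤ m + 1 → Good L t' → t' ≤ t) := by
  classical
  set t := Nat.findGreatest (Good L) (m + 1) with ht
  have htle : t ≤ m + 1 := Nat.findGreatest_le _
  have hPt : Good L t := Nat.findGreatest_spec (Nat.zero_le _) (good_zero L)
  have htm : t ≤ m := by
    rcases Nat.eq_or_lt_of_le htle with h | h
    · exact absurd (h ▸ hPt) hng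
    · omega
  obtain ⟨E, a, b, hw⟩ := hPt
  refine ⟨t, E, a, b, htm, hw, ?_, fun t' h1 h2 => Nat.le_findGreatest h1 h2⟩
  intro B hB hBE
  by_contra hcard
  push_neg at hcard
  obtain ⟨u, hu, v, hv, huv⟩ := Finset.one_lt_card.mp hcard
  rw [mem_sdiff] at hu hv
  have hgood : Good L (t + 1) :=
    ⟨_, _, _, hw.extend hB hBE hu.1 hv.1 huv
      (fun i h => hu.2 (h ▸ a_mem_usedW a b i)) (fun i h => hu.2 (h ▸ b_mem_usedW a b i))
      (fun i h => hv.2 (h ▸ a_mem_usedW a b i)) (fun i h => hv.2 (h ▸ b_mem_usedW a b i))⟩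
  have := Nat.findGreatest_is_greatest (P := Good L) (n := m + 1) (k := t + 1) (by omega) (by omega)
  exact this hgood

lemma exists_high_deg (L : Finset (Finset V)) (m K : ℕ)
    (hunif : ∀ B ∈ L, B.card = K + 2)
    (hng : ¬ Good L (m + 1)) (hLne : L.Nonempty) :
    ∃ x : V, L.card ≤ 2 * m * (L.filter (fun B => x ∈ B)).card := by
  obtain ⟨t, E, a, b, htm, hw, hhug, hmax⟩ := exists_maximal_witness L m hng
  have hWle : (usedW a b).card ≤ 2 * m := (card_usedW_le a b).trans (by omega)
  have hmeets : ∀ B ∈ L, ∃ w ∈ usedW a b, w ∈ B := by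
    intro B hB
    by_cases hBE : ∀ i, B ≠ E i
    · have h1 := hhug B hB hBE
      have h2 : B.card = K + 2 := hunif B hB
      by_contra hno
      push_neg at hno
      have hdisj : B \ usedW a b = B := by
        rw [Finset.sdiff_eq_self_iff_disjoint, disjoint_left]
        exact fun {w} hwB hwW => hno w hwW hwB
      rw [hdisj] at h1
      omega
    · push_neg at hBE
      obtain ⟨i, hi⟩ := hBE
      exact ⟨a i, a_mem_usedW a b i, hi ▸ hw.2.2.2.2.2.1 i⟩
  have hWne : (usedW a b).Nonempty := by
    obtain ⟨B, hB⟩ := hLne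
    obtain ⟨w, hw1, _⟩ := hmeets B hB
    exact ⟨w, hw1⟩
  obtain ⟨x, hxW, hxmax⟩ := Finset.exists_max_image (usedW a b)
    (fun w => (L.filter (fun B => w ∈ B)).card) hWne
  refine ⟨x, ?_⟩
  have hsub : L ⊆ (usedW a b).biUnion (fun w => L.filter (fun B => w ∈ B)) := by
    intro B hB
    obtain ⟨w, h1, h2⟩ := hmeets B hB
    exact mem_biUnion.mpr ⟨w, h1, mem_filter.mpr ⟨hB, h2⟩⟩
  calc L.card ≤ ((usedW a b).biUnion (fun w => L.filter (fun B => w ∈ B))).card :=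
        card_le_card hsub
    _ ≤ ∑ w ∈ usedW a b, (L.filter (fun B => w ∈ B)).card := card_biUnion_le
    _ ≤ (usedW a b).card • (L.filter (fun B => x ∈ B)).card :=
        Finset.sum_le_card_nsmul _ _ _ (fun w hwW => hxmax w hwW)
    _ = (usedW a b).card * (L.filter (fun B => x ∈ B)).card := smul_eq_mul _ _
    _ ≤ 2 * m * (L.filter (fun B => x ∈ B)).card := Nat.mul_le_mul_right _ hWle

lemma recon (B S : Finset V) (fB : V) (hKB : S ⊆ B) (hsing : B \ S = {fB}) :
    B = insert fB S := by
  ext w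
  constructor
  · intro hwB
    by_cases hwK : w ∈ S
    · exact mem_insert_of_mem hwK
    · have hws : w ∈ B \ S := mem_sdiff.mpr ⟨hwB, hwK⟩
      rw [hsing, mem_singleton] at hws
      exact hws ▸ mem_insert_self _ _
  · intro hw
    rcases mem_insert.mp hw with hwf | hwK
    · have hfs : fB ∈ B \ S := by rw [hsing]; exact mem_singleton_self _
      exact hwf ▸ (mem_sdiff.mp hfs).1
    · exact hKB hwK

lemma hug_struct (B S : Finset V) (c : ℕ) (hBc : B.card = c + 1) (hSc : S.card = c)
    (hhug : (B \ S).card ≤ 1) :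
    ∃ z, z ∈ B ∧ z ∉ S ∧ B = insert z S ∧ B \ S = {z} := by
  have h4 := card_sdiff_add_card_inter B S
  have h5 : (B ∩ S).card ≤ c := (card_le_card inter_subset_right).trans hSc.le
  have h2 : (B \ S).card = 1 := by omega
  obtain ⟨z, hz⟩ := card_eq_one.mp h2
  have hKB : S ⊆ B := by
    have h6 : B ∩ S = S :=
      Finset.eq_of_subset_of_card_le inter_subset_right (by omega)
    rw [← h6]
    exact inter_subset_left
  have hzB : z ∈ B \ S := by rw [hz]; exact mem_singleton_self _
  rw [mem_sdiff] at hzB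
  exact ⟨z, hzB.1, hzB.2, recon B S z hKB hz, hz⟩

lemma card_le_of_singletons (L' : Finset (Finset V)) (X : Finset V)
    (h1 : ∀ A ∈ L', A ⊆ X) (h2 : ∀ A ∈ L', A.card = 1) : L'.card ≤ X.card := by
  have hsub : L' ⊆ X.powersetCard 1 := fun A hA => mem_powersetCard.mpr ⟨h1 A hA, h2 A hA⟩
  have := card_le_card hsub
  rwa [card_powersetCard, Nat.choose_one_right] at this

end BergeAux

section Master

lemma master (m : ℕ) : ∀ K : ℕ, ∃ C₀ N₀ : ℕ,
    ∀ (V : Type) (_ : DecidableEq V) (X : Finset V) (L : Finset (Finset V)),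
      (∀ B ∈ L, B ⊆ X) → (∀ B ∈ L, B.card = K + 2) → ¬ Good L m →
      (m ≤ K + 1 → L.card ≤ C₀) ∧
      (∀ M, m = M + 2 → K + 2 ≤ m → N₀ ≤ X.card →
        L.card ≤ (M + 1).choose (K + 1) * X.card + (M + 1).choose (K + 2)) := by
  induction m using Nat.strong_induction_on with
  | _ m IH =>
  match m, IH with
  | 0, _ =>
    intro K
    exact ⟨0, 0, fun V _ X L _ _ hng => absurd (good_zero L) hng⟩
  | 1, _ =>
    intro K
    refine ⟨0, 0, fun V iV X L hX hunif hng => ⟨fun _ => ?_, fun M hM => by omega⟩⟩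
    rcases L.eq_empty_or_nonempty with rfl | ⟨B, hB⟩
    · simp
    · exfalso
      have hcard : 1 < B.card := by rw [hunif B hB]; omega
      obtain ⟨u, hu, v, hv, huv⟩ := Finset.one_lt_card.mp hcard
      exact hng ⟨fun _ => B, fun _ => u, fun _ => v,
        fun i j _ => Subsingleton.elim i j, fun i j _ => Subsingleton.elim i j,
        fun i j _ => Subsingleton.elim i j, fun _ _ => huv,
        fun _ => hB, fun _ => hu, fun _ => hv⟩
  | (M + 2), IH =>
    intro K
    obtain ⟨C₁, N₁, IH₁⟩ := IH (M + 1) (by omega) K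
    obtain ⟨C₂, N₂, IH₂⟩ := IH (M + 1) (by omega) (K - 1)
    set D := (2 * (M + 1)).choose (K + 1) + (M + 1) + 1 with hD
    set Dbig := 2 * (M + 1) * D with hDbig
    set C₀ := Dbig + C₁ + C₂ with hC₀
    set G₁ := (2 * (M + 1)).choose (K + 2) with hG₁
    set G₂ := (2 * (M + 1)).choose (K + 1) * (M + 4) with hG₂
    set N₀ := N₁ + N₂ + C₀ + C₁ + G₁ + G₂ + 2 * M + K + 12 with hN₀
    refine ⟨C₀, N₀, ?_⟩
    intro V iV X L hX hunif hng
    constructor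
    · -- constant regime : M + 2 ≤ K + 1
      intro hmK
      rcases L.eq_empty_or_nonempty with rfl | hLne
      · simp
      obtain ⟨x, hLx⟩ := exists_high_deg L (M + 1) K hunif hng hLne
      by_cases hdxD : (L.filter (fun B => x ∈ B)).card < D
      · have h1 : 2 * (M + 1) * (L.filter (fun B => x ∈ B)).card ≤ Dbig := by
          rw [hDbig]
          exact Nat.mul_le_mul_left _ (le_of_lt hdxD)
        have h2 : Dbig ≤ C₀ := by rw [hC₀]; omega
        omega
      · push_neg at hdxD
        have hdeg : (2 * (M + 1)).choose (K + 1) + (M + 1) + 1 ≤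
            (L.filter (fun B => x ∈ B)).card := by omega
        have h₀ := not_good_del L x (M + 1) K hunif hng hdeg
        have h₁ := not_good_link L x (M + 1) K hng hdeg hunif
        have hKpos : 1 ≤ K := by omega
        have c₁ : (L.filter (fun B => x ∉ B)).card ≤ C₁ := by
          refine (IH₁ V iV X (L.filter (fun B => x ∉ B))
            (fun B hB => hX B (mem_filter.mp hB).1)
            (fun B hB => hunif B (mem_filter.mp hB).1) h₀).1 (by omega)
        have c₂ : ((L.filter (fun B => x ∈ B)).image (fun B => B.erase x)).card ≤ C₂ := by
          refine (IH₂ V iV X ((L.filter (fun B => x ∈ B)).image (fun B => B.erase x))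
            ?_ ?_ h₁).1 (by omega)
          · intro A hA
            obtain ⟨B, hB, rfl⟩ := mem_image.mp hA
            exact (erase_subset _ _).trans (hX B (mem_filter.mp hB).1)
          · intro A hA
            obtain ⟨B, hB, rfl⟩ := mem_image.mp hA
            rw [mem_filter] at hB
            rw [card_erase_of_mem hB.2, hunif B hB.1]
            omega
        have hinj : ((L.filter (fun B => x ∈ B)).image (fun B => B.erase x)).card =
            (L.filter (fun B => x ∈ B)).card := by
          apply card_image_of_injOn
          intro B1 h1 B2 h2 h
          rw [mem_coe, mem_filter] at h1 h2
          have h' : B1.erase x = B2.erase x := h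
          rw [← insert_erase h1.2, ← insert_erase h2.2, h']
        have hsplit : (L.filter (fun B => x ∈ B)).card +
            (L.filter (fun B => ¬ x ∈ B)).card = L.card :=
          card_filter_add_card_filter_not (fun B => x ∈ B)
        have hfix : (L.filter (fun B => ¬ x ∈ B)).card = (L.filter (fun B => x ∉ B)).card := rfl
        have h2 : Dbig ≤ C₀ := by rw [hC₀]; omega
        omega
    · -- binomial regime
      rintro M' hM' hKM hNX
      rw [show M' = M by omega]
      have hKM' : K ≤ M := by omega
      rcases L.eq_empty_or_nonempty with rfl | hLne
      · simp
      have hchpos : 0 < (M + 1).choose (K + 1) := Nat.choose_pos (by omega)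
      rcases Nat.lt_or_ge K M with hKlt | hKge
      · -- step case K < M
        obtain ⟨M1, rfl⟩ : ∃ M1, M = M1 + 1 := ⟨M - 1, by omega⟩
        obtain ⟨x, hLx⟩ := exists_high_deg L (M1 + 2) K hunif hng hLne
        by_cases hdxD : (L.filter (fun B => x ∈ B)).card < D
        · -- small degree case
          have h1 : 2 * (M1 + 2) * (L.filter (fun B => x ∈ B)).card ≤ Dbig := by
            rw [hDbig]
            exact Nat.mul_le_mul_left _ (le_of_lt hdxD)
          have h2 : X.card ≤ (M1 + 1 + 1).choose (K + 1) * X.card :=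
            Nat.le_mul_of_pos_left _ hchpos
          have h3 : Dbig ≤ C₀ := by rw [hC₀]; omega
          have h5 : L.card ≤ X.card := by omega
          exact h5.trans (h2.trans (Nat.le_add_right _ _))
        · push_neg at hdxD
          have hdeg : (2 * (M1 + 1 + 1)).choose (K + 1) + (M1 + 1 + 1) + 1 ≤
              (L.filter (fun B => x ∈ B)).card := by omega
          have h₀ := not_good_del L x (M1 + 2) K hunif hng hdeg
          have h₁ := not_good_link L x (M1 + 2) K hng hdeg hunif
          -- bound L₀ via IH₁ (binomial regime)
          have c₁ : (L.filter (fun B => x ∉ B)).card ≤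
              (M1 + 1).choose (K + 1) * X.card + (M1 + 1).choose (K + 2) := by
            refine (IH₁ V iV X (L.filter (fun B => x ∉ B))
              (fun B hB => hX B (mem_filter.mp hB).1)
              (fun B hB => hunif B (mem_filter.mp hB).1) h₀).2 M1 rfl (by omega) (by omega)
          -- bound the link via IH₂ (binomial regime) or directly when K = 0
          have hinj : ((L.filter (fun B => x ∈ B)).image (fun B => B.erase x)).card =
              (L.filter (fun B => x ∈ B)).card := by
            apply card_image_of_injOn
            intro B1 h1 B2 h2 h
            rw [mem_coe, mem_filter] at h1 h2
            have h' : B1.erase x = B2.erase x := h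
            rw [← insert_erase h1.2, ← insert_erase h2.2, h']
          have hlinkX : ∀ A ∈ (L.filter (fun B => x ∈ B)).image (fun B => B.erase x),
              A ⊆ X := by
            intro A hA
            obtain ⟨B, hB, rfl⟩ := mem_image.mp hA
            exact (erase_subset _ _).trans (hX B (mem_filter.mp hB).1)
          have c₂ : (L.filter (fun B => x ∈ B)).card ≤
              (M1 + 1).choose K * X.card + (M1 + 1).choose (K + 1) := by
            rcases Nat.eq_zero_or_pos K with rfl | hKpos
            · -- K = 0 : the link is 1-uniform
              have hsing : ((L.filter (fun B => x ∈ B)).image (fun B => B.erase x)).card ≤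
                  X.card := by
                apply card_le_of_singletons _ _ hlinkX
                intro A hA
                obtain ⟨B, hB, rfl⟩ := mem_image.mp hA
                rw [mem_filter] at hB
                rw [card_erase_of_mem hB.2, hunif B hB.1]
              have h4 : X.card ≤ (M1 + 1).choose 0 * X.card + (M1 + 1).choose (0 + 1) := by
                rw [Nat.choose_zero_right, one_mul]
                exact Nat.le_add_right _ _
              omega
            · have hlink := (IH₂ V iV X
                ((L.filter (fun B => x ∈ B)).image (fun B => B.erase x))
                hlinkX ?_ h₁).2 M1 rfl (by omega) (by omega)
              · rw [show K - 1 + 1 = K by omega, show K - 1 + 2 = K + 1 by omega] at hlink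
                omega
              · intro A hA
                obtain ⟨B, hB, rfl⟩ := mem_image.mp hA
                rw [mem_filter] at hB
                rw [card_erase_of_mem hB.2, hunif B hB.1]
                omega
          have hsplit : (L.filter (fun B => x ∈ B)).card +
              (L.filter (fun B => ¬ x ∈ B)).card = L.card :=
            card_filter_add_card_filter_not (fun B => x ∈ B)
          have hp1 : (M1 + 2).choose (K + 1) = (M1 + 1).choose K + (M1 + 1).choose (K + 1) :=
            Nat.choose_succ_succ (M1 + 1) K
          have hp2 : (M1 + 2).choose (K + 2) =
              (M1 + 1).choose (K + 1) + (M1 + 1).choose (K + 2) :=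
            Nat.choose_succ_succ (M1 + 1) (K + 1)
          have hgoal : (M1 + 1 + 1).choose (K + 1) * X.card + (M1 + 1 + 1).choose (K + 2) =
              ((M1 + 1).choose K * X.card + (M1 + 1).choose (K + 1) * X.card) +
                ((M1 + 1).choose (K + 1) + (M1 + 1).choose (K + 2)) := by
            rw [show M1 + 1 + 1 = M1 + 2 from rfl, hp1, hp2, add_mul]
          rw [hgoal]
          omega
      · -- base case K = K
        have hKM2 : K = M := by omega
        subst hKM2
        by_contra hcon
        push_neg at hcon
        have hzero : (K + 1).choose (K + 2) = 0 := Nat.choose_eq_zero_of_lt (by omega)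
        rw [Nat.choose_self, hzero, one_mul, add_zero] at hcon
        -- hcon : X.card < L.card
        obtain ⟨t, E, a, b, htm, hw, hhug, hmax⟩ := exists_maximal_witness L (K + 1) hng
        have hGoodM1 : Good L (K + 1) := by
          by_contra hng1
          have hb := (IH₁ V iV X L hX hunif hng1).1 (by omega)
          omega
        have ht : t = K + 1 := le_antisymm htm (hmax (K + 1) (by omega) hGoodM1)
        subst ht
        have hWle : (usedW a b).card ≤ 2 * (K + 1) := card_usedW_le a b
        -- split off exceptional sets
        have hcomp : L.filter (fun B => ¬((∀ i, B ≠ E i) ∧ ¬ B ⊆ usedW a b)) ⊆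
            (Finset.univ.image E) ∪ L.filter (fun B => B ⊆ usedW a b) := by
          intro B hB
          rw [mem_filter] at hB
          by_cases hQ : B ⊆ usedW a b
          · exact mem_union_right _ (mem_filter.mpr ⟨hB.1, hQ⟩)
          · have hex : ∃ i, B = E i := by
              by_contra h'
              push_neg at h'
              exact hB.2 ⟨h', hQ⟩
            obtain ⟨i, hi⟩ := hex
            exact mem_union_left _ (mem_image.mpr ⟨i, mem_univ i, hi.symm⟩)
        have hsplit2 : (L.filter (fun B => (∀ i, B ≠ E i) ∧ ¬ B ⊆ usedW a b)).card +
            (L.filter (fun B => ¬((∀ i, B ≠ E i) ∧ ¬ B ⊆ usedW a b))).card = L.card :=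
          card_filter_add_card_filter_not _
        have himE : (Finset.univ.image E).card ≤ K + 1 := by
          calc (Finset.univ.image E).card ≤ (Finset.univ : Finset (Fin (K + 1))).card :=
              card_image_le
            _ = K + 1 := by simp
        have hsubW : (L.filter (fun B => B ⊆ usedW a b)).card ≤ G₁ := by
          refine (card_filter_subset_le L (usedW a b) (K + 2) hunif).trans ?_
          rw [hG₁]
          exact Nat.choose_le_choose _ hWle
        have hcompcard : (L.filter (fun B => ¬((∀ i, B ≠ E i) ∧ ¬ B ⊆ usedW a b))).card ≤
            (K + 1) + G₁ :=
          (card_le_card hcomp).trans ((card_union_le _ _).trans (add_le_add himE hsubW))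
        -- pigeonhole
        have hmaps : ∀ B ∈ L.filter (fun B => (∀ i, B ≠ E i) ∧ ¬ B ⊆ usedW a b),
            B ∩ usedW a b ∈ (usedW a b).powersetCard (K + 1) := by
          intro B hB
          rw [mem_filter] at hB
          have h1 : (B \ usedW a b).card ≤ 1 := hhug B hB.1 hB.2.1
          have h2 : (B \ usedW a b).Nonempty := sdiff_nonempty.mpr hB.2.2
          have h3 : 1 ≤ (B \ usedW a b).card := card_pos.mpr h2
          have h4 := card_sdiff_add_card_inter B (usedW a b)
          rw [hunif B hB.1] at h4
          exact mem_powersetCard.mpr ⟨inter_subset_right, by omega⟩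
        have hcard_ps : ((usedW a b).powersetCard (K + 1)).card * (K + 4) <
            (L.filter (fun B => (∀ i, B ≠ E i) ∧ ¬ B ⊆ usedW a b)).card := by
          rw [card_powersetCard]
          have hch : (usedW a b).card.choose (K + 1) ≤ (2 * (K + 1)).choose (K + 1) :=
            Nat.choose_le_choose _ hWle
          have hmul : (usedW a b).card.choose (K + 1) * (K + 4) ≤ G₂ := by
            rw [hG₂]
            exact Nat.mul_le_mul_right _ hch
          omega
        obtain ⟨K₀, hK₀mem, hK₀big⟩ :=
          exists_lt_card_fiber_of_mul_lt_card_of_maps_to hmaps hcard_ps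
        have hK₀big2 : K + 4 < ((L.filter (fun B => (∀ i, B ≠ E i) ∧ ¬ B ⊆ usedW a b)).filter
            (fun B => B ∩ usedW a b = K₀)).card := hK₀big
        rw [mem_powersetCard] at hK₀mem
        obtain ⟨hK₀W, hK₀card⟩ := hK₀mem
        -- facts about fiber members
        have hPfacts : ∀ B ∈ (L.filter (fun B => (∀ i, B ≠ E i) ∧ ¬ B ⊆ usedW a b)).filter
            (fun B => B ∩ usedW a b = K₀),
            B ∈ L ∧ (B \ K₀).card ≤ 1 ∧ B \ K₀ = B \ usedW a b := by
          intro B hB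
          rw [mem_filter, mem_filter] at hB
          obtain ⟨⟨hBL, hBne, hBnsub⟩, hBint⟩ := hB
          have h1 : (B \ usedW a b).card ≤ 1 := hhug B hBL hBne
          have heq : B \ K₀ = B \ usedW a b := by
            apply Finset.Subset.antisymm
            · intro y hy
              rw [mem_sdiff] at hy ⊢
              refine ⟨hy.1, fun hyW => hy.2 ?_⟩
              rw [← hBint]
              exact mem_inter.mpr ⟨hy.1, hyW⟩
            · exact sdiff_subset_sdiff Subset.rfl hK₀W
          exact ⟨hBL, heq ▸ h1, heq⟩
        -- a junk element
        obtain ⟨B₀, hB₀⟩ := hLne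
        have hB₀ne : B₀.Nonempty := card_pos.mp (by rw [hunif B₀ hB₀]; omega)
        obtain ⟨v₀, hv₀⟩ := hB₀ne
        set yf : Finset V → V := fun B => if h : (B \ K₀).Nonempty then h.choose else v₀
          with hyf
        have hyfspec : ∀ B, (B \ K₀).Nonempty → yf B ∈ B \ K₀ := by
          intro B h
          rw [hyf]
          simp only
          rw [dif_pos h]
          exact h.choose_spec
        have hstruct : ∀ B ∈ L, (B \ K₀).card ≤ 1 →
            yf B ∈ B ∧ yf B ∉ K₀ ∧ B = insert (yf B) K₀ ∧ B \ K₀ = {yf B} := by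
          intro B hBL hhg
          obtain ⟨z, hz1, hz2, hz3, hz4⟩ := hug_struct B K₀ (K + 1) (hunif B hBL) hK₀card hhg
          have hne : (B \ K₀).Nonempty := ⟨z, by rw [hz4]; exact mem_singleton_self _⟩
          have hyz : yf B = z := by
            have := hyfspec B hne
            rw [hz4, mem_singleton] at this
            exact this
          rw [hyz]
          exact ⟨hz1, hz2, hz3, hz4⟩
        -- the key claim: every B ∈ L hugs K₀
        have hK₀hug : ∀ B ∈ L, (B \ K₀).card ≤ 1 := by
          by_contra hcl
          push_neg at hcl
          obtain ⟨Bs, hBsL, hBs2⟩ := hcl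
          obtain ⟨u, hum, v, hvm, huv⟩ := Finset.one_lt_card.mp hBs2
          rw [mem_sdiff] at hum hvm
          -- good petals
          set P := (L.filter (fun B => (∀ i, B ≠ E i) ∧ ¬ B ⊆ usedW a b)).filter
            (fun B => B ∩ usedW a b = K₀) with hPdef
          have hfib : ∀ z : V, (P.filter (fun B => yf B = z)).card ≤ 1 := by
            intro z
            apply card_le_one.mpr
            intro B1 h1 B2 h2
            rw [mem_filter] at h1 h2
            obtain ⟨e1, e2, e3⟩ := hPfacts B1 h1.1
            obtain ⟨f1, f2, f3⟩ := hPfacts B2 h2.1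
            rw [(hstruct B1 e1 e2).2.2.1, (hstruct B2 f1 f2).2.2.1, h1.2, h2.2]
          set Pg := P.filter (fun B => yf B ≠ u ∧ yf B ≠ v) with hPgdef
          have hPgcard : K + 1 ≤ Pg.card := by
            have hsubP : P.filter (fun B => ¬(yf B ≠ u ∧ yf B ≠ v)) ⊆
                (P.filter (fun B => yf B = u)) ∪ (P.filter (fun B => yf B = v)) := by
              intro B hB
              rw [mem_filter] at hB
              rcases Classical.em (yf B = u) with h | h
              · exact mem_union_left _ (mem_filter.mpr ⟨hB.1, h⟩)
              · refine mem_union_right _ (mem_filter.mpr ⟨hB.1, ?_⟩)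
                rcases Classical.em (yf B = v) with h' | h'
                · exact h'
                · exact absurd ⟨h, h'⟩ hB.2
            have hcompl : (P.filter (fun B => ¬(yf B ≠ u ∧ yf B ≠ v))).card ≤ 2 := by
              have hu1 := hfib u
              have hv1 := hfib v
              have := (card_le_card hsubP).trans (card_union_le _ _)
              omega
            have hsplit3 : Pg.card + (P.filter (fun B => ¬(yf B ≠ u ∧ yf B ≠ v))).card =
                P.card := by
              rw [hPgdef]
              exact card_filter_add_card_filter_not _
            omega
          obtain ⟨P', hP'sub, hP'card⟩ := Finset.exists_subset_card_eq hPgcard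
          have hP'P : ∀ B ∈ P', B ∈ P := fun B hB => (mem_filter.mp (hP'sub hB)).1
          -- enumerations
          set eP : Fin (K + 1) → Finset V :=
            fun i => (P'.equivFin.symm (Fin.cast hP'card.symm i) : Finset V) with hePdef
          have hePmem : ∀ i, eP i ∈ P' := fun i => (P'.equivFin.symm (Fin.cast hP'card.symm i)).2
          have hePinj : Function.Injective eP := by
            intro i j h
            have h2 := P'.equivFin.symm.injective (Subtype.ext h)
            have h3 : (i : ℕ) = j := by simpa using congrArg Fin.val h2
            exact Fin.ext h3
          set eK : Fin (K + 1) → V :=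
            fun i => (K₀.equivFin.symm (Fin.cast hK₀card.symm i) : V) with heKdef
          have heKmem : ∀ i, eK i ∈ K₀ := fun i => (K₀.equivFin.symm (Fin.cast hK₀card.symm i)).2
          have heKinj : Function.Injective eK := by
            intro i j h
            have h2 := K₀.equivFin.symm.injective (Subtype.ext h)
            have h3 : (i : ℕ) = j := by simpa using congrArg Fin.val h2
            exact Fin.ext h3
          have hPmemL : ∀ i, eP i ∈ L := fun i => (hPfacts (eP i) (hP'P _ (hePmem i))).1
          have hPhug : ∀ i, (eP i \ K₀).card ≤ 1 :=
            fun i => (hPfacts (eP i) (hP'P _ (hePmem i))).2.1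
          have hPyW : ∀ i, yf (eP i) ∉ usedW a b := by
            intro i
            have heq := (hPfacts (eP i) (hP'P _ (hePmem i))).2.2
            have hmem := (hstruct (eP i) (hPmemL i) (hPhug i)).2.2.2
            intro hcontr
            have : yf (eP i) ∈ eP i \ K₀ := by rw [hmem]; exact mem_singleton_self _
            rw [heq, mem_sdiff] at this
            exact this.2 hcontr
          have hwit : Wness L eP eK (fun i => yf (eP i)) := by
            refine ⟨hePinj, heKinj, ?_, ?_, hPmemL, ?_, ?_⟩
            · intro i j h
              apply hePinj
              have h' : yf (eP i) = yf (eP j) := h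
              rw [(hstruct (eP i) (hPmemL i) (hPhug i)).2.2.1,
                (hstruct (eP j) (hPmemL j) (hPhug j)).2.2.1, h']
            · intro i j h
              have h' : eK i = yf (eP j) := h
              exact hPyW j (by rw [← h']; exact hK₀W (heKmem i))
            · intro i
              have h6 := (hstruct (eP i) (hPmemL i) (hPhug i)).2.2.1
              rw [h6]
              exact mem_insert_of_mem (heKmem i)
            · intro i
              exact (hstruct (eP i) (hPmemL i) (hPhug i)).1
          apply hng
          refine ⟨_, _, _, hwit.extend hBsL ?_ hum.1 hvm.1 huv ?_ ?_ ?_ ?_⟩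
          · intro i h
            have h1 : (eP i \ K₀).card ≤ 1 := hPhug i
            rw [← h] at h1
            omega
          · intro i h
            exact hum.2 (by rw [h]; exact heKmem i)
          · intro i h
            exact ((mem_filter.mp (hP'sub (hePmem i))).2.1 h.symm).elim
          · intro i h
            exact hvm.2 (by rw [h]; exact heKmem i)
          · intro i h
            exact ((mem_filter.mp (hP'sub (hePmem i))).2.2 h.symm).elim
        -- final count
        have hLX2 : L.card ≤ X.card := by
          apply card_le_card_of_injOn yf
          · intro B hB
            obtain ⟨h1, h2, h3, h4⟩ := hstruct B hB (hK₀hug B hB)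
            exact hX B hB h1
          · intro B1 hB1 B2 hB2 h
            rw [mem_coe] at hB1 hB2
            rw [(hstruct B1 hB1 (hK₀hug B1 hB1)).2.2.1,
              (hstruct B2 hB2 (hK₀hug B2 hB2)).2.2.1, h]
        omega

end Master

section Final

lemma pair_fun_injective {n : ℕ} {α : Type*} (a b : Fin n → α)
    (ha : Function.Injective a) (hb : Function.Injective b) (hab : ∀ i j, a i ≠ b j) :
    Function.Injective (fun p : Fin n × Fin 2 => if p.2 = 0 then a p.1 else b p.1) := by
  rintro ⟨i, ci⟩ ⟨j, cj⟩ h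
  simp only at h
  fin_cases ci <;> fin_cases cj <;> simp only [reduceIte] at h ⊢
  · exact Prod.ext (ha h) rfl
  · exact absurd h (hab i j)
  · exact absurd h.symm (hab j i)
  · exact Prod.ext (hb h) rfl

/-- Claim: for `s ≥ 2` and `3 ≤ r ≤ s+1`, for all sufficiently large `n`, every
`n`-vertex `r`-graph with no Berge copy of `M_{s+1}` has maximum degree at most
`C(s-1, r-2)(n-1) + C(s-1, r-1)`. -/
theorem berge_matching_free_max_degree
    (s r : ℕ) (hs : 2 ≤ s) (hr : 3 ≤ r) (hrs : r ≤ s + 1) :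
    ∃ n₀ : ℕ, ∀ n : ℕ, n₀ ≤ n →
      ∀ H : Finset (Finset (Fin n)), IsUniform r H →
        ¬ ContainsBerge (matchingHG (s + 1)) H →
        ∀ v : Fin n, (H.filter fun e => v ∈ e).card ≤
          Nat.choose (s - 1) (r - 2) * (n - 1) + Nat.choose (s - 1) (r - 1) := by
  classical
  obtain ⟨K, rfl⟩ : ∃ K, r = K + 3 := ⟨r - 3, by omega⟩
  obtain ⟨M, rfl⟩ : ∃ M, s = M + 2 := ⟨s - 2, by omega⟩
  have hKM : K ≤ M := by omega
  obtain ⟨C₀, N₀, hmaster⟩ := master (M + 2) K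
  refine ⟨N₀ + (2 * (M + 2)).choose (K + 2) + M + K + 10, ?_⟩
  intro n hn H hH hNB v
  by_contra hdeg
  push_neg at hdeg
  have e1 : M + 2 - 1 = M + 1 := by omega
  have e2 : K + 3 - 2 = K + 1 := by omega
  have e3 : K + 3 - 1 = K + 2 := by omega
  rw [e1, e2, e3] at hdeg
  set X : Finset (Fin n) := Finset.univ.erase v with hXdef
  have hXcard : X.card = n - 1 := by
    rw [hXdef, card_erase_of_mem (mem_univ v), card_univ, Fintype.card_fin]
  set L := (H.filter (fun e => v ∈ e)).image (fun e => e.erase v) with hLdef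
  have hinj : L.card = (H.filter (fun e => v ∈ e)).card := by
    rw [hLdef]
    apply card_image_of_injOn
    intro f1 h1 f2 h2 h
    rw [mem_coe, mem_filter] at h1 h2
    have h' : f1.erase v = f2.erase v := h
    rw [← insert_erase h1.2, ← insert_erase h2.2, h']
  have hLX : ∀ B ∈ L, B ⊆ X := by
    intro B hBm
    rw [hLdef] at hBm
    obtain ⟨e, he, rfl⟩ := mem_image.mp hBm
    intro w hw
    rw [hXdef, mem_erase]
    exact ⟨(mem_erase.mp hw).1, mem_univ w⟩
  have hLu : ∀ B ∈ L, B.card = K + 2 := by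
    intro B hBm
    rw [hLdef] at hBm
    obtain ⟨e, he, rfl⟩ := mem_image.mp hBm
    rw [mem_filter] at he
    rw [card_erase_of_mem he.2, hH e he.1]
    omega
  have hn1 : N₀ ≤ X.card := by omega
  have hGood : Good L (M + 2) := by
    by_contra hng
    have hcl := (hmaster (Fin n) (by infer_instance) X L hLX hLu hng).2 M rfl (by omega) hn1
    rw [hXcard] at hcl
    omega
  obtain ⟨E, a, b, hE, ha, hb, hab, hEL, haE, hbE⟩ := hGood
  have hWle : (usedW a b).card ≤ 2 * (M + 2) := card_usedW_le a b
  have hex : ∃ B ∈ L, (∀ i, B ≠ E i) ∧ ¬ B ⊆ usedW a b := by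
    by_contra hno
    push_neg at hno
    have hsub : L ⊆ (Finset.univ.image E) ∪ L.filter (fun B => B ⊆ usedW a b) := by
      intro B hBm
      by_cases hQ : ∀ i, B ≠ E i
      · exact mem_union_right _ (mem_filter.mpr ⟨hBm, hno B hBm hQ⟩)
      · push_neg at hQ
        obtain ⟨i, hi⟩ := hQ
        exact mem_union_left _ (mem_image.mpr ⟨i, mem_univ i, hi.symm⟩)
    have h1 := (card_le_card hsub).trans (card_union_le _ _)
    have h2 : (Finset.univ.image E).card ≤ M + 2 := by
      calc (Finset.univ.image E).card ≤ (Finset.univ : Finset (Fin (M + 2))).card :=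
          card_image_le
        _ = M + 2 := by simp
    have h3 := (card_filter_subset_le L (usedW a b) (K + 2) hLu).trans
      (Nat.choose_le_choose _ hWle)
    have h4 : X.card ≤ (M + 1).choose (K + 1) * X.card :=
      Nat.le_mul_of_pos_left _ (Nat.choose_pos (by omega))
    rw [hXcard] at h4
    omega
  obtain ⟨B, hBL, hBne, hBnsub⟩ := hex
  obtain ⟨y, hyB, hyW⟩ := not_subset.mp hBnsub
  have hLmem : ∀ B' ∈ L, insert v B' ∈ H ∧ v ∉ B' := by
    intro B' hB'
    rw [hLdef] at hB'
    obtain ⟨e, he, rfl⟩ := mem_image.mp hB'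
    rw [mem_filter] at he
    exact ⟨by rw [insert_erase he.2]; exact he.1, notMem_erase v e⟩
  have hvX : ∀ w ∈ X, w ≠ v := by
    intro w hw
    rw [hXdef, mem_erase] at hw
    exact hw.1
  have hav : ∀ i, a i ≠ v := fun i => hvX _ (hLX (E i) (hEL i) (haE i))
  have hbv : ∀ i, b i ≠ v := fun i => hvX _ (hLX (E i) (hEL i) (hbE i))
  have hyv : y ≠ v := hvX _ (hLX B hBL hyB)
  have hvE : ∀ i, v ∉ E i := fun i => (hLmem (E i) (hEL i)).2
  have hvB : v ∉ B := (hLmem B hBL).2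
  set a' : Fin (M + 2 + 1) → Fin n := Fin.snoc a v with ha'def
  set b' : Fin (M + 2 + 1) → Fin n := Fin.snoc b y with hb'def
  set E' : Fin (M + 2 + 1) → Finset (Fin n) :=
    Fin.snoc (fun i => insert v (E i)) (insert v B) with hE'def
  have ha' : Function.Injective a' := snoc_injective ha (fun i => Ne.symm (hav i))
  have hb' : Function.Injective b' :=
    snoc_injective hb (fun i h => hyW (h ▸ b_mem_usedW a b i))
  have hab' : ∀ i j, a' i ≠ b' j := by
    intro i j
    induction i using Fin.lastCases with
    | last =>
      induction j using Fin.lastCases with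
      | last => simpa [ha'def, hb'def] using Ne.symm hyv
      | cast j => simpa [ha'def, hb'def] using Ne.symm (hbv j)
    | cast i =>
      induction j using Fin.lastCases with
      | last =>
        simp only [ha'def, hb'def, Fin.snoc_castSucc, Fin.snoc_last]
        exact fun h => hyW (h ▸ a_mem_usedW a b i)
      | cast j => simpa [ha'def, hb'def] using hab i j
  have hE'inj : Function.Injective E' := by
    apply snoc_injective
    · intro i j h
      apply hE
      have h' : insert v (E i) = insert v (E j) := h
      have h2 : (insert v (E i)).erase v = (insert v (E j)).erase v := by rw [h']
      rwa [erase_insert (hvE i), erase_insert (hvE j)] at h2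
    · intro i h
      apply hBne i
      have h' : insert v B = insert v (E i) := h
      have h2 : (insert v B).erase v = (insert v (E i)).erase v := by rw [h']
      rwa [erase_insert hvB, erase_insert (hvE i)] at h2
  have hE'H : ∀ i, E' i ∈ H := by
    intro i
    induction i using Fin.lastCases with
    | last => simpa [hE'def] using (hLmem B hBL).1
    | cast i => simpa [hE'def] using (hLmem (E i) (hEL i)).1
  have ha'mem : ∀ i, a' i ∈ E' i := by
    intro i
    induction i using Fin.lastCases with
    | last =>
      simp only [ha'def, hE'def, Fin.snoc_last]
      exact mem_insert_self _ _
    | cast i =>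
      simp only [ha'def, hE'def, Fin.snoc_castSucc]
      exact mem_insert_of_mem (haE i)
  have hb'mem : ∀ i, b' i ∈ E' i := by
    intro i
    induction i using Fin.lastCases with
    | last =>
      simp only [hb'def, hE'def, Fin.snoc_last]
      exact mem_insert_of_mem hyB
    | cast i =>
      simp only [hb'def, hE'def, Fin.snoc_castSucc]
      exact mem_insert_of_mem (hbE i)
  set g : Fin (M + 2 + 1) × Fin 2 → Fin n :=
    fun p => if p.2 = 0 then a' p.1 else b' p.1 with hgdef
  have hg : Function.Injective g := pair_fun_injective a' b' ha' hb' hab'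
  have hpairinj : ∀ i j : Fin (M + 2 + 1),
      ({(i, 0), (i, 1)} : Finset (Fin (M + 2 + 1) × Fin 2)) = {(j, 0), (j, 1)} → i = j := by
    intro i j h
    have h0 : ((i, 0) : Fin (M + 2 + 1) × Fin 2) ∈
        ({(j, 0), (j, 1)} : Finset (Fin (M + 2 + 1) × Fin 2)) := by
      rw [← h]
      exact mem_insert_self _ _
    rcases mem_insert.mp h0 with h1 | h1
    · exact congrArg Prod.fst h1
    · rw [mem_singleton] at h1
      have h2 : (0 : Fin 2) = 1 := congrArg Prod.snd h1
      exact absurd h2 (by decide)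
  set φ : Finset (Fin (M + 2 + 1) × Fin 2) → Finset (Fin n) :=
    fun e => if h : ∃ i : Fin (M + 2 + 1),
        ({(i, 0), (i, 1)} : Finset (Fin (M + 2 + 1) × Fin 2)) = e
      then E' h.choose else ∅ with hφdef
  have hφval : ∀ i : Fin (M + 2 + 1),
      φ ({(i, 0), (i, 1)} : Finset (Fin (M + 2 + 1) × Fin 2)) = E' i := by
    intro i
    have hex' : ∃ j : Fin (M + 2 + 1),
        ({(j, 0), (j, 1)} : Finset (Fin (M + 2 + 1) × Fin 2)) = {(i, 0), (i, 1)} := ⟨i, rfl⟩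
    rw [hφdef]
    simp only
    rw [dif_pos hex']
    exact congrArg E' (hpairinj _ _ hex'.choose_spec)
  have hmem_matching : ∀ e ∈ matchingHG (M + 2 + 1),
      ∃ i : Fin (M + 2 + 1), ({(i, 0), (i, 1)} : Finset (Fin (M + 2 + 1) × Fin 2)) = e := by
    intro e he
    simp only [matchingHG, mem_image, mem_univ, true_and] at he
    exact he
  apply hNB
  refine ⟨g, φ, hg, ?_, ?_, ?_⟩
  · intro e he e' he' heq
    obtain ⟨i, hi⟩ := hmem_matching e he
    obtain ⟨j, hj⟩ := hmem_matching e' he'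
    rw [← hi, ← hj] at heq ⊢
    rw [hφval, hφval] at heq
    rw [hE'inj heq]
  · intro e he
    obtain ⟨i, hi⟩ := hmem_matching e he
    rw [← hi, hφval]
    exact hE'H i
  · intro e he
    obtain ⟨i, hi⟩ := hmem_matching e he
    rw [← hi, hφval]
    intro w hw
    simp only [mem_image, mem_insert, mem_singleton] at hw
    obtain ⟨p, hp, rfl⟩ := hw
    have hg0 : g (i, 0) = a' i := by
      show (if (0 : Fin 2) = 0 then a' i else b' i) = a' i
      rw [if_pos rfl]
    have hg1 : g (i, 1) = b' i := by
      show (if (1 : Fin 2) = 0 then a' i else b' i) = b' i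
      rw [if_neg (by decide : ¬ (1 : Fin 2) = 0)]
    rcases hp with rfl | rfl
    · rw [hg0]
      exact ha'mem i
    · rw [hg1]
      exact hb'mem i

end Final
end
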